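/- arXiv:1302.0614 — 6 statements merged into one kernel-verified Lean document; each statement's English description precedes it below -/
import Mathlib

section
/- Fix real β ≥ 1 and n ≥ 0. For each positive integer N define Z_N = ∏_{k=0}^{N−1} Γ(N(β−1)+1+k)·Γ(Nn+1+k)·Γ(k+2) / Γ(N(β+n)+1+k). Then lim_{N→∞} (−log Z_N)/N² = ((β+n+1)²/2)·log(β+n+1) − ((β+n)²/2)·log(β+n) − (β²/2)·log β + ((β−1)²/2)·log(β−1) − ((1+n)²/2)·log(1+n) + (n²/2)·log n, where any term of the form (c²/2)·log c with c = 0 is interpreted as 0. -/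
open Real Filter
open scoped BigOperators

open scoped Topology

namespace NormAsymp

noncomputable def L (x : ℝ) : ℝ := x * Real.log x - x
noncomputable def F (x : ℝ) : ℝ := x^2/2 * Real.log x - 3/4 * x^2

lemma one_sub_inv_le_log {x : ℝ} (hx : 0 < x) : 1 - 1/x ≤ Real.log x := by
  have h := Real.log_le_sub_one_of_pos (show (0:ℝ) < x⁻¹ by positivity)
  rw [Real.log_inv] at h
  have : (1:ℝ)/x = x⁻¹ := one_div x
  linarith [this ▸ h]

lemma log_le_sub_one {x : ℝ} (hx : 0 < x) : Real.log x ≤ x - 1 :=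
  Real.log_le_sub_one_of_pos hx

lemma mul_log_mono {a b : ℝ} (ha : 1 ≤ a) (hab : a ≤ b) :
    a * Real.log a ≤ b * Real.log b :=
  mul_le_mul hab (Real.log_le_log (by linarith) hab) (Real.log_nonneg ha) (by linarith)

lemma L_mono {a b : ℝ} (ha : 1 ≤ a) (hab : a ≤ b) : L a ≤ L b := by
  have hb : (1:ℝ) ≤ b := le_trans ha hab
  have h1 : Real.log b - Real.log a = Real.log (b / a) := (Real.log_div (by linarith) (by linarith)).symm
  have h2 : 1 - a/b ≤ Real.log (b/a) := by
    have := one_sub_inv_le_log (show (0:ℝ) < b/a by positivity)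
    have hinv : 1/(b/a) = a/b := by field_simp
    linarith [hinv ▸ this]
  have h3 : 1 - 1/b ≤ Real.log b := one_sub_inv_le_log (by linarith)
  have hbv : b - a ≤ b * (Real.log b - Real.log a) := by
    rw [h1]
    have := mul_le_mul_of_nonneg_left h2 (show (0:ℝ) ≤ b by linarith)
    have hba : b * (1 - a/b) = b - a := by field_simp
    linarith [hba ▸ this]
  have hbu : b - 1 ≤ b * Real.log b := by
    have := mul_le_mul_of_nonneg_left h3 (show (0:ℝ) ≤ b by linarith)
    have hbb : b * (1 - 1/b) = b - 1 := by field_simp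
    linarith [hbb ▸ this]
  have expand : b*(L b - L a) = (b-a)*(b*Real.log b) + a*(b*(Real.log b - Real.log a)) - b*(b-a) := by
    simp only [L]; ring
  have h5 : (b-a)*(b-1) ≤ (b-a)*(b*Real.log b) := mul_le_mul_of_nonneg_left hbu (by linarith)
  have h6 : a*(b-a) ≤ a*(b*(Real.log b - Real.log a)) := mul_le_mul_of_nonneg_left hbv (by linarith)
  have h7 : 0 ≤ b*(L b - L a) := by nlinarith
  have := (mul_nonneg_iff_of_pos_left (show (0:ℝ) < b by linarith)).mp h7
  linarith

lemma abs_L_le {t : ℝ} (h0 : 0 ≤ t) (h2 : t ≤ 2) : |L t| ≤ 4 := by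
  rcases eq_or_lt_of_le h0 with h | h
  · simp [L, ← h]
  · rcases le_total t 1 with h1 | h1
    · have hl : Real.log t ≤ 0 := Real.log_nonpos (le_of_lt h) h1
      have : 1 - 1/t ≤ Real.log t := one_sub_inv_le_log h
      have ht : t * Real.log t ≥ t * (1 - 1/t) := mul_le_mul_of_nonneg_left this (le_of_lt h)
      have ht2 : t * (1 - 1/t) = t - 1 := by field_simp
      have hne : t * Real.log t ≤ 0 := mul_nonpos_of_nonneg_of_nonpos h0 hl
      rw [abs_le]; constructor <;> simp only [L] <;> nlinarith
    · have hl0 : 0 ≤ Real.log t := Real.log_nonneg h1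
      have hl : Real.log t ≤ 1 := le_trans (log_le_sub_one h) (by linarith)
      have : t * Real.log t ≤ 2 := by nlinarith
      have : 0 ≤ t * Real.log t := mul_nonneg h0 hl0
      rw [abs_le]; constructor <;> simp only [L] <;> nlinarith [mul_le_mul_of_nonneg_left hl h0]

lemma F_continuous : Continuous F := by
  have h : F = fun x => (x * Real.log x) * (x/2) - 3/4*x^2 := by
    funext x; simp only [F]; ring
  rw [h]
  exact (Real.continuous_mul_log.mul (by continuity)).sub (by continuity)

lemma F_hasDerivAt {x : ℝ} (hx : x ≠ 0) : HasDerivAt F (L x) x := by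
  have h1 : HasDerivAt (fun y : ℝ => y^2/2 * Real.log y)
      ((2*x^1)/2 * Real.log x + x^2/2 * x⁻¹) x :=
    ((hasDerivAt_pow 2 x).div_const 2).mul (Real.hasDerivAt_log hx)
  have h2 : HasDerivAt (fun y : ℝ => 3/4*y^2) (3/4*(2*x^1)) x :=
    (hasDerivAt_pow 2 x).const_mul (3/4)
  have h3 := h1.sub h2
  have : (2*x^1)/2 * Real.log x + x^2/2 * x⁻¹ - 3/4*(2*x^1) = L x := by
    simp only [L]; field_simp; ring
  rw [this] at h3
  exact h3

lemma F_diff_bound {x : ℝ} (hx : 1 ≤ x) : |F x - F (x-1) - L x| ≤ Real.log x + 8 := by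
  obtain ⟨c, hc, hceq⟩ := exists_hasDerivAt_eq_slope F L (show x-1 < x by linarith)
    (F_continuous.continuousOn)
    (fun y hy => F_hasDerivAt (by rcases hy with ⟨h1, h2⟩; nlinarith : y ≠ 0))
  have hxx : x - (x-1) = 1 := by ring
  have hFc : F x - F (x-1) = L c := by
    rw [hceq, hxx, div_one]
  rw [hFc]
  rcases hc with ⟨hc1, hc2⟩
  have hc0 : 0 < c := lt_of_le_of_lt (by linarith) hc1
  rcases le_total x 2 with h2 | h2
  · have hLc := abs_L_le (le_of_lt hc0) (by linarith)
    have hLx := abs_L_le (by linarith) h2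
    have hlx : 0 ≤ Real.log x := Real.log_nonneg hx
    calc |L c - L x| ≤ |L c| + |L x| := abs_sub _ _
    _ ≤ Real.log x + 8 := by linarith
  · -- x ≥ 2, so c ≥ 1 and L is monotone
    have hc1' : (1:ℝ) ≤ c := by linarith
    have hmono : L c ≤ L x := L_mono hc1' (le_of_lt hc2)
    have hlx : 0 ≤ Real.log x := Real.log_nonneg hx
    -- L x - L c ≤ log x + 1
    have hxc : Real.log x - Real.log c = Real.log (x/c) := (Real.log_div (by linarith) (by linarith)).symm
    have hlog : Real.log (x/c) ≤ x/c - 1 := log_le_sub_one (by positivity)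
    have hckey : c * (Real.log x - Real.log c) ≤ x - c := by
      rw [hxc]
      have := mul_le_mul_of_nonneg_left hlog (show (0:ℝ) ≤ c by linarith)
      have hcc : c * (x/c - 1) = x - c := by field_simp
      linarith [hcc ▸ this]
    have hexp : L x - L c = (x-c)*Real.log x + c*(Real.log x - Real.log c) - (x-c) := by
      simp only [L]; ring
    have hxc1 : x - c ≤ 1 := by linarith
    have h6 : (x-c)*Real.log x ≤ 1*Real.log x := mul_le_mul_of_nonneg_right hxc1 hlx
    rw [abs_sub_comm, abs_le]
    constructor <;> nlinarith

noncomputable def slog (m : ℕ) : ℝ := ∑ j ∈ Finset.range m, Real.log (1+j)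

lemma slog_lb (m : ℕ) : (m:ℝ) * Real.log m - m ≤ slog m := by
  induction m with
  | zero => simp [slog]
  | succ m ih =>
    have hstep : ((m:ℝ)+1) * Real.log ((m:ℝ)+1) - (m*Real.log m) ≤ 1 + Real.log ((m:ℝ)+1) := by
      rcases Nat.eq_zero_or_pos m with hm | hm
      · subst hm; simp
      · have hm1 : (1:ℝ) ≤ (m:ℝ) := by exact_mod_cast hm
        have hd : Real.log ((m:ℝ)+1) - Real.log m = Real.log (((m:ℝ)+1)/m) :=
          (Real.log_div (by linarith) (by linarith)).symm
        have hle : Real.log (((m:ℝ)+1)/m) ≤ ((m:ℝ)+1)/m - 1 := log_le_sub_one (by positivity)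
        have h2 : (m:ℝ) * (Real.log ((m:ℝ)+1) - Real.log m) ≤ 1 := by
          rw [hd]
          have := mul_le_mul_of_nonneg_left hle (show (0:ℝ) ≤ m by linarith)
          have he : (m:ℝ) * (((m:ℝ)+1)/m - 1) = 1 := by field_simp; ring
          linarith [he ▸ this]
        nlinarith
    rw [slog, Finset.sum_range_succ, ← slog]
    push_cast
    have : Real.log (1 + (m:ℝ)) = Real.log ((m:ℝ)+1) := by ring_nf
    rw [this]
    linarith

lemma slog_ub (m : ℕ) : slog m ≤ ((m:ℝ)+1) * Real.log ((m:ℝ)+1) - m := by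
  induction m with
  | zero => simp [slog]
  | succ m ih =>
    have hkey : 1 ≤ ((m:ℝ)+2) * (Real.log ((m:ℝ)+2) - Real.log ((m:ℝ)+1)) := by
      have hd : Real.log ((m:ℝ)+2) - Real.log ((m:ℝ)+1) = Real.log (((m:ℝ)+2)/((m:ℝ)+1)) :=
        (Real.log_div (by positivity) (by positivity)).symm
      have hge : 1 - 1/(((m:ℝ)+2)/((m:ℝ)+1)) ≤ Real.log (((m:ℝ)+2)/((m:ℝ)+1)) :=
        one_sub_inv_le_log (by positivity)
      have he : 1 - 1/(((m:ℝ)+2)/((m:ℝ)+1)) = 1/((m:ℝ)+2) := by field_simp; ring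
      rw [hd]
      rw [he] at hge
      have := mul_le_mul_of_nonneg_left hge (show (0:ℝ) ≤ (m:ℝ)+2 by positivity)
      have he2 : ((m:ℝ)+2) * (1/((m:ℝ)+2)) = 1 := by field_simp
      linarith [he2 ▸ this]
    rw [slog, Finset.sum_range_succ, ← slog]
    push_cast
    have h1 : Real.log (1 + (m:ℝ)) = Real.log ((m:ℝ)+1) := by ring_nf
    have h2 : (m:ℝ)+1+1 = (m:ℝ)+2 := by ring
    rw [h1, h2]
    have hkey' : 1 + ((m:ℝ)+2)*Real.log ((m:ℝ)+1) ≤ ((m:ℝ)+2)*Real.log ((m:ℝ)+2) := by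
      nlinarith [hkey]
    nlinarith [hkey', ih]

lemma sum_log_theta_lb {θ : ℝ} (h0 : 0 ≤ θ) (m : ℕ) :
    slog m ≤ ∑ j ∈ Finset.range m, Real.log (1+θ+j) := by
  apply Finset.sum_le_sum
  intro j _
  apply Real.log_le_log (by positivity)
  linarith

lemma sum_log_theta_ub {θ : ℝ} (h0 : 0 ≤ θ) (h1 : θ ≤ 1) (m : ℕ) :
    ∑ j ∈ Finset.range m, Real.log (1+θ+j) ≤ slog (m+1) := by
  have he : slog (m+1) = ∑ j ∈ Finset.range m, Real.log (1+(j:ℝ)+1) := by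
    rw [slog, Finset.sum_range_succ']
    push_cast
    simp only [add_zero, Real.log_one]
    apply Finset.sum_congr rfl
    intro j _
    ring_nf
  rw [he]
  apply Finset.sum_le_sum
  intro j _
  apply Real.log_le_log (by positivity)
  linarith
lemma logGamma_shift {θ : ℝ} (h0 : 0 ≤ θ) (m : ℕ) :
    Real.log (Real.Gamma (1+θ+m)) =
      Real.log (Real.Gamma (1+θ)) + ∑ j ∈ Finset.range m, Real.log (1+θ+j) := by
  induction m with
  | zero => simp
  | succ m ih =>
    have harg : (1:ℝ)+θ+(m+1:ℕ) = (1+θ+m) + 1 := by push_cast; ring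
    have hpos : (0:ℝ) < 1+θ+m := by positivity
    rw [harg, Real.Gamma_add_one (ne_of_gt hpos),
      Real.log_mul (ne_of_gt hpos) (ne_of_gt (Real.Gamma_pos_of_pos hpos)),
      ih, Finset.sum_range_succ]
    push_cast
    ring

lemma Gamma_three : Real.Gamma 3 = 2 := by
  have := Real.Gamma_nat_eq_factorial 2
  norm_num at this
  convert this using 2
  norm_num

lemma Gamma_two : Real.Gamma 2 = 1 := by
  have := Real.Gamma_nat_eq_factorial 1
  norm_num at this
  convert this using 2
  norm_num

lemma abs_logGamma_one_add {θ : ℝ} (h0 : 0 ≤ θ) (h1 : θ ≤ 1) :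
    |Real.log (Real.Gamma (1+θ))| ≤ Real.log 2 := by
  have hmono := Real.Gamma_strictMonoOn_Ici.monotoneOn
  have hml : Real.Gamma 2 ≤ Real.Gamma (2+θ) := by
    apply hmono (by simp : (2:ℝ) ∈ Set.Ici 2) (by simp [Set.mem_Ici]; linarith : (2:ℝ)+θ ∈ Set.Ici 2)
    linarith
  have hmu : Real.Gamma (2+θ) ≤ Real.Gamma 3 := by
    apply hmono (by simp [Set.mem_Ici]; linarith : (2:ℝ)+θ ∈ Set.Ici 2)
      (by simp [Set.mem_Ici]; norm_num : (3:ℝ) ∈ Set.Ici 2)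
    linarith
  rw [Gamma_two] at hml
  rw [Gamma_three] at hmu
  have heq : Real.Gamma (2+θ) = (1+θ) * Real.Gamma (1+θ) := by
    have : (2:ℝ)+θ = (1+θ)+1 := by ring
    rw [this, Real.Gamma_add_one (by positivity)]
  have hGpos : 0 < Real.Gamma (1+θ) := Real.Gamma_pos_of_pos (by positivity)
  have hub : Real.Gamma (1+θ) ≤ 2 := by nlinarith
  have hlb : (1:ℝ)/2 ≤ Real.Gamma (1+θ) := by nlinarith
  rw [abs_le]
  constructor
  · have := Real.log_le_log (by norm_num : (0:ℝ) < 1/2) hlb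
    rw [Real.log_div one_ne_zero two_ne_zero, Real.log_one] at this
    linarith
  · exact Real.log_le_log hGpos hub

lemma logGamma_approx {x : ℝ} (hx : 1 ≤ x) :
    |Real.log (Real.Gamma x) - L x| ≤ 3 * Real.log x + 7 := by
  set m : ℕ := ⌊x - 1⌋₊ with hm
  set θ : ℝ := x - 1 - m with hθ
  have hx1 : (0:ℝ) ≤ x - 1 := by linarith
  have hmle : (m:ℝ) ≤ x - 1 := Nat.floor_le hx1
  have hmgt : x - 2 < (m:ℝ) := by
    have := Nat.lt_floor_add_one (x-1); linarith
  have h0 : 0 ≤ θ := by simp only [hθ]; linarith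
  have h1 : θ < 1 := by simp only [hθ]; linarith
  have hme : x = 1 + θ + m := by simp only [hθ]; ring
  have hGx : Real.log (Real.Gamma x) = Real.log (Real.Gamma (1+θ)) +
      ∑ j ∈ Finset.range m, Real.log (1+θ+j) := by rw [hme]; exact logGamma_shift h0 m
  have hA := abs_logGamma_one_add h0 (le_of_lt h1)
  rw [abs_le] at hA
  have hSl := le_trans (slog_lb m) (sum_log_theta_lb h0 m)
  have hSu := le_trans (sum_log_theta_ub h0 (le_of_lt h1) m) (slog_ub (m+1))
  push_cast at hSu
  have hlog2 : Real.log 2 ≤ 1 := by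
    have := log_le_sub_one (by norm_num : (0:ℝ) < 2); linarith
  have hlog2' : 0 ≤ Real.log 2 := Real.log_nonneg (by norm_num)
  have hlogx : 0 ≤ Real.log x := Real.log_nonneg hx
  have hxpos : (0:ℝ) < x := by linarith
  rw [abs_le]
  constructor
  · -- need : -(3 log x + 7) ≤ log Γ x - L x, via upper bound on L x - log Γ x
    -- L x - log Γ x ≤ L x + log 2 - (m log m - m)
    have hLm : (m:ℝ) * Real.log m - m = L m := by simp only [L]
    have hbase : Real.log (Real.Gamma x) ≥ L (m:ℝ) - Real.log 2 := by
      rw [hGx, ← hLm] at *; linarith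
    rcases le_total x 3 with h3 | h3
    · -- small case
      have hm2 : (m:ℝ) ≤ 2 := by linarith
      have hLm1 : -1 ≤ L (m:ℝ) := by
        rcases Nat.eq_zero_or_pos m with h | h
        · simp [h, L]
        · have h1m : (1:ℝ) ≤ (m:ℝ) := by exact_mod_cast h
          have := L_mono (le_refl (1:ℝ)) h1m
          simp only [L, Real.log_one] at this ⊢
          linarith
      have hxlx : x * Real.log x ≤ 3 * Real.log x := by nlinarith
      simp only [L] at *
      linarith
    · -- x ≥ 3
      have hx2 : (1:ℝ) ≤ x - 2 := by linarith
      have hLmono : L (x-2) ≤ L (m:ℝ) := L_mono hx2 (le_of_lt hmgt)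
      have hld : Real.log x - Real.log (x-2) = Real.log (x/(x-2)) :=
        (Real.log_div (by linarith) (by linarith)).symm
      have hll : Real.log (x/(x-2)) ≤ x/(x-2) - 1 := log_le_sub_one (by positivity)
      have hkey : (x-2) * (Real.log x - Real.log (x-2)) ≤ 2 := by
        rw [hld]
        have := mul_le_mul_of_nonneg_left hll (show (0:ℝ) ≤ x-2 by linarith)
        have he : (x-2) * (x/(x-2) - 1) = 2 := by field_simp; ring
        linarith [he ▸ this]
      simp only [L] at *
      nlinarith
  · -- upper : log Γ x - L x ≤ 3 log x + 7
    have h2 : (m:ℝ) + 1 + 1 ≤ x + 1 := by linarith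
    have hmm : ((m:ℝ)+1+1) * Real.log ((m:ℝ)+1+1) ≤ (x+1) * Real.log (x+1) :=
      mul_log_mono (by have : (0:ℝ) ≤ (m:ℝ) := Nat.cast_nonneg m; linarith) h2
    have hlx1 : Real.log (x+1) ≤ Real.log x + 1/x := by
      have hd : Real.log (x+1) - Real.log x = Real.log ((x+1)/x) :=
        (Real.log_div (by linarith) (by linarith)).symm
      have hle : Real.log ((x+1)/x) ≤ (x+1)/x - 1 := log_le_sub_one (by positivity)
      have he : (x+1)/x - 1 = 1/x := by field_simp; ring
      linarith [hd, he ▸ hle]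
    have hx1x : (x+1) * Real.log (x+1) ≤ x * Real.log x + Real.log x + 2 := by
      have h4 : (x+1) * Real.log (x+1) ≤ (x+1) * (Real.log x + 1/x) :=
        mul_le_mul_of_nonneg_left hlx1 (by linarith)
      have h5 : (x+1) * (1/x) = 1 + 1/x := by field_simp
      have h6 : 1/x ≤ 1 := by rw [div_le_one hxpos]; linarith
      nlinarith
    simp only [L] at *
    nlinarith

lemma logGamma_F_bound {x : ℝ} (hx : 1 ≤ x) :
    |Real.log (Real.Gamma x) - (F x - F (x-1))| ≤ 4*Real.log x + 15 := by
  have h1 := logGamma_approx hx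
  have h2 := F_diff_bound hx
  calc |Real.log (Real.Gamma x) - (F x - F (x-1))|
      = |(Real.log (Real.Gamma x) - L x) - ((F x - F (x-1)) - L x)| := by ring_nf
    _ ≤ |Real.log (Real.Gamma x) - L x| + |(F x - F (x-1)) - L x| := abs_sub _ _
    _ ≤ 4*Real.log x + 15 := by linarith

lemma sum_bound (c : ℝ) (hc : 1 ≤ c) (N : ℕ) :
    |(∑ k ∈ Finset.range N, Real.log (Real.Gamma (c+k))) - (F (c+N-1) - F (c-1))| ≤
      N * (4*Real.log (c+N) + 15) := by
  induction N with
  | zero => simp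
  | succ N ih =>
    have hc1 : (1:ℝ) ≤ c + N := by
      have : (0:ℝ) ≤ (N:ℝ) := Nat.cast_nonneg N
      linarith
    have hpt := logGamma_F_bound hc1
    have hlog : Real.log (c+N) ≤ Real.log (c+(N+1:ℕ)) := by
      apply Real.log_le_log (by linarith)
      push_cast; linarith
    have hlogpos : 0 ≤ Real.log (c+(N+1:ℕ)) := by
      apply Real.log_nonneg
      push_cast; linarith
    rw [Finset.sum_range_succ]
    have harg : c + ((N:ℕ):ℝ) - 1 = (c + N) - 1 := by norm_num
    have harg2 : c + ((N+1:ℕ):ℝ) - 1 = c + N := by push_cast; ring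
    calc |(∑ k ∈ Finset.range N, Real.log (Real.Gamma (c+k))) + Real.log (Real.Gamma (c+N))
          - (F (c+(N+1:ℕ)-1) - F (c-1))|
        = |((∑ k ∈ Finset.range N, Real.log (Real.Gamma (c+k))) - (F (c+N-1) - F (c-1)))
            + (Real.log (Real.Gamma (c+N)) - (F (c+N) - F ((c+N)-1)))| := by
          rw [harg2]
          have : F (c+N-1) = F ((c+N)-1) := by norm_num
          rw [this]
          ring_nf
      _ ≤ |(∑ k ∈ Finset.range N, Real.log (Real.Gamma (c+k))) - (F (c+N-1) - F (c-1))|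
            + |Real.log (Real.Gamma (c+N)) - (F (c+N) - F ((c+N)-1))| := abs_add_le _ _
      _ ≤ N * (4*Real.log (c+N) + 15) + (4*Real.log (c+N) + 15) := by linarith
      _ ≤ (N+1:ℕ) * (4*Real.log (c+(N+1:ℕ)) + 15) := by
          push_cast
          have hN : (0:ℝ) ≤ (N:ℝ) := Nat.cast_nonneg N
          have h15 : 4*Real.log (c+N) + 15 ≤ 4*Real.log (c+(N+1:ℕ)) + 15 := by linarith
          push_cast at h15 hlog
          nlinarith

noncomputable def G (a : ℝ) : ℝ := a^2/2 * Real.log a - 3/4 * a^2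

lemma F_scale {a : ℝ} (ha : 0 ≤ a) {N : ℕ} (hN : 1 ≤ N) :
    F ((N:ℝ)*a) = (N:ℝ)^2 * G a + (N:ℝ)^2 * (a^2/2) * Real.log N := by
  rcases eq_or_lt_of_le ha with h | h
  · simp [← h, F, G]
  · have hN0 : (N:ℝ) ≠ 0 := by positivity
    rw [F, G, Real.log_mul hN0 (ne_of_gt h)]
    ring

lemma tendsto_log_nat_div : Tendsto (fun N : ℕ => Real.log ((N:ℝ)+1) / (N:ℝ)) atTop (𝓝 0) := by
  have h0 : Tendsto (fun x : ℝ => Real.log x / x) atTop (𝓝 0) :=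
    Real.isLittleO_log_id_atTop.tendsto_div_nhds_zero
  have hcomp : Tendsto (fun N : ℕ => ((N:ℝ)+1)) atTop atTop :=
    tendsto_atTop_add_const_right atTop 1 tendsto_natCast_atTop_atTop
  have h1 : Tendsto (fun N : ℕ => Real.log ((N:ℝ)+1) / ((N:ℝ)+1)) atTop (𝓝 0) :=
    h0.comp hcomp
  have h2 : Tendsto (fun N : ℕ => ((N:ℝ)+1)/(N:ℝ)) atTop (𝓝 1) := by
    have : Tendsto (fun N : ℕ => 1/(N:ℝ)) atTop (𝓝 0) := tendsto_one_div_atTop_nhds_zero_nat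
    have h3 : Tendsto (fun N : ℕ => 1 + 1/(N:ℝ)) atTop (𝓝 (1+0)) :=
      tendsto_const_nhds.add this
    rw [add_zero] at h3
    apply h3.congr'
    filter_upwards [eventually_ge_atTop 1] with N hN
    have : (N:ℝ) ≠ 0 := by positivity
    field_simp
  have := h1.mul h2
  rw [zero_mul] at this
  apply this.congr'
  filter_upwards [eventually_ge_atTop 1] with N hN
  have hN0 : (N:ℝ) ≠ 0 := by positivity
  have hN1 : (N:ℝ)+1 ≠ 0 := by positivity
  field_simp

lemma tendsto_one_div_nat : Tendsto (fun N : ℕ => 1/(N:ℝ)) atTop (𝓝 0) :=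
  tendsto_one_div_atTop_nhds_zero_nat

lemma tendsto_log_one_add : Tendsto (fun N : ℕ => Real.log (1 + 1/(N:ℝ))) atTop (𝓝 0) := by
  have h1 : Tendsto (fun N : ℕ => 1 + 1/(N:ℝ)) atTop (𝓝 (1+0)) :=
    tendsto_const_nhds.add tendsto_one_div_nat
  rw [add_zero] at h1
  have h2 := (Real.continuousAt_log one_ne_zero).tendsto.comp h1
  rw [Real.log_one] at h2
  exact h2

lemma abs_comb {a1 a2 a3 a4 b1 b2 b3 b4 e1 e2 e3 e4 : ℝ}
    (h1 : |a1-b1| ≤ e1) (h2 : |a2-b2| ≤ e2) (h3 : |a3-b3| ≤ e3) (h4 : |a4-b4| ≤ e4) :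
    |(a1 + (a2 + (a3 - a4))) - (b1 + b2 + b3 - b4)| ≤ e1+e2+e3+e4 := by
  have hre : (a1 + (a2 + (a3 - a4))) - (b1 + b2 + b3 - b4)
      = (a1-b1) + ((a2-b2) + ((a3-b3) - (a4-b4))) := by ring
  rw [hre]
  have t1 := abs_add_le (a1-b1) ((a2-b2) + ((a3-b3) - (a4-b4)))
  have t2 := abs_add_le (a2-b2) ((a3-b3) - (a4-b4))
  have t3 := abs_sub (a3-b3) (a4-b4)
  linarith

set_option maxHeartbeats 2000000 in
theorem main (β n : ℝ) (hβ : 1 ≤ β) (hn : 0 ≤ n) :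
    Tendsto
      (fun N : ℕ =>
        -Real.log
            (∏ k ∈ Finset.range N,
              Real.Gamma (N * (β - 1) + 1 + k) * Real.Gamma (N * n + 1 + k) *
                  Real.Gamma (k + 2) / Real.Gamma (N * (β + n) + 1 + k)) /
          (N : ℝ) ^ 2)
      atTop
      (nhds
        ((β + n + 1) ^ 2 / 2 * Real.log (β + n + 1)
          - (β + n) ^ 2 / 2 * Real.log (β + n)
          - β ^ 2 / 2 * Real.log β
          + (β - 1) ^ 2 / 2 * Real.log (β - 1)
          - (1 + n) ^ 2 / 2 * Real.log (1 + n)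
          + n ^ 2 / 2 * Real.log n)) := by
  have hβ0 : (0:ℝ) ≤ β - 1 := by linarith
  set logZ : ℕ → ℝ := fun N => Real.log
            (∏ k ∈ Finset.range N,
              Real.Gamma (N * (β - 1) + 1 + k) * Real.Gamma (N * n + 1 + k) *
                  Real.Gamma (k + 2) / Real.Gamma (N * (β + n) + 1 + k)) with hlogZ
  set Main : ℕ → ℝ := fun N =>
      (F ((N:ℝ)*β) - F ((N:ℝ)*(β-1))) + (F ((N:ℝ)*(n+1)) - F ((N:ℝ)*n))
      + (F ((N:ℝ)+1) - F 1) - (F ((N:ℝ)*(β+n+1)) - F ((N:ℝ)*(β+n))) with hMain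
  set Gsum : ℝ := G β - G (β-1) + G (n+1) - G n - G (β+n+1) + G (β+n) with hGsum
  -- positivity of the Gamma arguments
  have harg1 : ∀ (N k : ℕ), (0:ℝ) < (N:ℝ)*(β-1)+1+k := by
    intro N k
    have h1 : (0:ℝ) ≤ (N:ℝ)*(β-1) := mul_nonneg (Nat.cast_nonneg N) hβ0
    have h2 : (0:ℝ) ≤ (k:ℝ) := Nat.cast_nonneg k
    linarith
  have harg2 : ∀ (N k : ℕ), (0:ℝ) < (N:ℝ)*n+1+k := by
    intro N k
    have h1 : (0:ℝ) ≤ (N:ℝ)*n := mul_nonneg (Nat.cast_nonneg N) hn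
    have h2 : (0:ℝ) ≤ (k:ℝ) := Nat.cast_nonneg k
    linarith
  have harg3 : ∀ (k : ℕ), (0:ℝ) < (k:ℝ)+2 := by
    intro k
    have h2 : (0:ℝ) ≤ (k:ℝ) := Nat.cast_nonneg k
    linarith
  have harg4 : ∀ (N k : ℕ), (0:ℝ) < (N:ℝ)*(β+n)+1+k := by
    intro N k
    have h1 : (0:ℝ) ≤ (N:ℝ)*(β+n) := mul_nonneg (Nat.cast_nonneg N) (by linarith)
    have h2 : (0:ℝ) ≤ (k:ℝ) := Nat.cast_nonneg k
    linarith
  -- Step A : split the log of the product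
  have hsplit : ∀ N : ℕ, logZ N =
      (∑ k ∈ Finset.range N, Real.log (Real.Gamma ((N:ℝ)*(β-1)+1+k)))
      + ((∑ k ∈ Finset.range N, Real.log (Real.Gamma ((N:ℝ)*n+1+k)))
      + ((∑ k ∈ Finset.range N, Real.log (Real.Gamma ((2:ℝ)+k)))
      - (∑ k ∈ Finset.range N, Real.log (Real.Gamma ((N:ℝ)*(β+n)+1+k))))) := by
    intro N
    have hne : ∀ k ∈ Finset.range N,
        Real.Gamma ((N:ℝ) * (β - 1) + 1 + k) * Real.Gamma ((N:ℝ) * n + 1 + k) *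
          Real.Gamma ((k:ℝ) + 2) / Real.Gamma ((N:ℝ) * (β + n) + 1 + k) ≠ 0 := by
      intro k _
      have g1 := Real.Gamma_pos_of_pos (harg1 N k)
      have g2 := Real.Gamma_pos_of_pos (harg2 N k)
      have g3 := Real.Gamma_pos_of_pos (show (0:ℝ) < (k:ℝ)+2 from harg3 k)
      have g4 := Real.Gamma_pos_of_pos (harg4 N k)
      positivity
    simp only [hlogZ]
    rw [Real.log_prod hne]
    have hterm : ∀ k ∈ Finset.range N,
        Real.log (Real.Gamma ((N:ℝ) * (β - 1) + 1 + k) * Real.Gamma ((N:ℝ) * n + 1 + k) *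
          Real.Gamma ((k:ℝ) + 2) / Real.Gamma ((N:ℝ) * (β + n) + 1 + k))
        = Real.log (Real.Gamma ((N:ℝ)*(β-1)+1+k))
          + (Real.log (Real.Gamma ((N:ℝ)*n+1+k))
          + (Real.log (Real.Gamma ((2:ℝ)+k))
          - Real.log (Real.Gamma ((N:ℝ)*(β+n)+1+k)))) := by
      intro k _
      have g1 := Real.Gamma_pos_of_pos (harg1 N k)
      have g2 := Real.Gamma_pos_of_pos (harg2 N k)
      have g3 := Real.Gamma_pos_of_pos (show (0:ℝ) < (k:ℝ)+2 from harg3 k)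
      have g4 := Real.Gamma_pos_of_pos (harg4 N k)
      rw [Real.log_div (by positivity) (ne_of_gt g4), Real.log_mul (by positivity) (ne_of_gt g3),
        Real.log_mul (ne_of_gt g1) (ne_of_gt g2), show ((k:ℝ)+2) = (2:ℝ)+k from by ring]
      ring
    rw [Finset.sum_congr rfl hterm, Finset.sum_add_distrib, Finset.sum_add_distrib,
      Finset.sum_sub_distrib]
  -- Step B : error bound
  have herr : ∀ N : ℕ, |logZ N - Main N| ≤ 4*(N:ℝ)*(4*Real.log ((β+n+2)*((N:ℝ)+1)) + 15) := by
    intro N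
    have hNc : (0:ℝ) ≤ (N:ℝ) := Nat.cast_nonneg N
    have hb1 : (0:ℝ) ≤ (N:ℝ)*(β-1) := mul_nonneg hNc hβ0
    have hb2 : (0:ℝ) ≤ (N:ℝ)*n := mul_nonneg hNc hn
    have hb4 : (0:ℝ) ≤ (N:ℝ)*(β+n) := mul_nonneg hNc (by linarith)
    have b1 := sum_bound ((N:ℝ)*(β-1)+1) (by linarith) N
    rw [show (N:ℝ)*(β-1)+1+(N:ℝ)-1 = (N:ℝ)*β from by ring,
        show (N:ℝ)*(β-1)+1-1 = (N:ℝ)*(β-1) from by ring] at b1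
    have b2 := sum_bound ((N:ℝ)*n+1) (by linarith) N
    rw [show (N:ℝ)*n+1+(N:ℝ)-1 = (N:ℝ)*(n+1) from by ring,
        show (N:ℝ)*n+1-1 = (N:ℝ)*n from by ring] at b2
    have b3 := sum_bound (2:ℝ) (by norm_num) N
    rw [show (2:ℝ)+(N:ℝ)-1 = (N:ℝ)+1 from by ring,
        show (2:ℝ)-1 = (1:ℝ) from by norm_num] at b3
    have b4 := sum_bound ((N:ℝ)*(β+n)+1) (by linarith) N
    rw [show (N:ℝ)*(β+n)+1+(N:ℝ)-1 = (N:ℝ)*(β+n+1) from by ring,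
        show (N:ℝ)*(β+n)+1-1 = (N:ℝ)*(β+n) from by ring] at b4
    -- the common log bound
    have hCpos : (0:ℝ) < β+n+2 := by linarith
    have hL1 : Real.log ((N:ℝ)*(β-1)+1+N) ≤ Real.log ((β+n+2)*((N:ℝ)+1)) := by
      apply Real.log_le_log (by linarith)
      nlinarith
    have hL2 : Real.log ((N:ℝ)*n+1+N) ≤ Real.log ((β+n+2)*((N:ℝ)+1)) := by
      apply Real.log_le_log (by linarith)
      nlinarith
    have hL3 : Real.log ((2:ℝ)+N) ≤ Real.log ((β+n+2)*((N:ℝ)+1)) := by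
      apply Real.log_le_log (by linarith)
      nlinarith
    have hL4 : Real.log ((N:ℝ)*(β+n)+1+N) ≤ Real.log ((β+n+2)*((N:ℝ)+1)) := by
      apply Real.log_le_log (by linarith)
      nlinarith
    have e1 : (N:ℝ) * (4*Real.log ((N:ℝ)*(β-1)+1+N) + 15)
        ≤ (N:ℝ) * (4*Real.log ((β+n+2)*((N:ℝ)+1)) + 15) := by
      apply mul_le_mul_of_nonneg_left (by linarith) hNc
    have e2 : (N:ℝ) * (4*Real.log ((N:ℝ)*n+1+N) + 15)
        ≤ (N:ℝ) * (4*Real.log ((β+n+2)*((N:ℝ)+1)) + 15) := by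
      apply mul_le_mul_of_nonneg_left (by linarith) hNc
    have e3 : (N:ℝ) * (4*Real.log ((2:ℝ)+N) + 15)
        ≤ (N:ℝ) * (4*Real.log ((β+n+2)*((N:ℝ)+1)) + 15) := by
      apply mul_le_mul_of_nonneg_left (by linarith) hNc
    have e4 : (N:ℝ) * (4*Real.log ((N:ℝ)*(β+n)+1+N) + 15)
        ≤ (N:ℝ) * (4*Real.log ((β+n+2)*((N:ℝ)+1)) + 15) := by
      apply mul_le_mul_of_nonneg_left (by linarith) hNc
    rw [hsplit N]
    simp only [hMain]
    have hcomb := abs_comb (le_trans b1 e1) (le_trans b2 e2) (le_trans b3 e3) (le_trans b4 e4)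
    calc _ ≤ _ := hcomb
      _ = 4*(N:ℝ)*(4*Real.log ((β+n+2)*((N:ℝ)+1)) + 15) := by ring
  -- Step C : main term limit
  have hmain : Tendsto (fun N : ℕ => Main N / (N:ℝ)^2) atTop (𝓝 (Gsum - 3/4)) := by
    have hform : (fun N : ℕ => Gsum + (1/2)*Real.log (1 + 1/(N:ℝ))
        + ((2*(N:ℝ)+1)/(2*(N:ℝ)))*(Real.log ((N:ℝ)+1)/(N:ℝ))
        - (3/4)*(1+1/(N:ℝ))^2 + (3/4)*(1/(N:ℝ))^2)
        =ᶠ[atTop] (fun N : ℕ => Main N / (N:ℝ)^2) := by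
      filter_upwards [eventually_ge_atTop 1] with N hN
      have hN0 : (0:ℝ) < (N:ℝ) := by exact_mod_cast Nat.pos_of_ne_zero (by omega)
      have hN0' : (N:ℝ) ≠ 0 := ne_of_gt hN0
      simp only [hMain]
      rw [F_scale (show (0:ℝ) ≤ β by linarith) hN, F_scale hβ0 hN,
        F_scale (show (0:ℝ) ≤ n+1 by linarith) hN, F_scale hn hN,
        F_scale (show (0:ℝ) ≤ β+n+1 by linarith) hN,
        F_scale (show (0:ℝ) ≤ β+n by linarith) hN]
      rw [show (1:ℝ) + 1/(N:ℝ) = ((N:ℝ)+1)/(N:ℝ) from by field_simp]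
      rw [Real.log_div (by positivity) hN0']
      simp only [F, hGsum]
      rw [Real.log_one]
      field_simp
      ring
    have t1 := tendsto_log_one_add
    have t2 : Tendsto (fun N : ℕ => (2*(N:ℝ)+1)/(2*(N:ℝ))) atTop (𝓝 1) := by
      have h2 : Tendsto (fun N : ℕ => 1 + (1/2)*(1/(N:ℝ))) atTop (𝓝 (1 + (1/2)*0)) :=
        tendsto_const_nhds.add (tendsto_one_div_nat.const_mul _)
      norm_num at h2
      apply h2.congr'
      filter_upwards [eventually_ge_atTop 1] with N hN
      have hN0 : (0:ℝ) < (N:ℝ) := by exact_mod_cast Nat.pos_of_ne_zero (by omega)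
      field_simp
    have t3 := tendsto_log_nat_div
    have t4 : Tendsto (fun N : ℕ => ((1:ℝ) + 1/(N:ℝ))^2) atTop (𝓝 1) := by
      have h2 : Tendsto (fun N : ℕ => (1:ℝ) + 1/(N:ℝ)) atTop (𝓝 (1+0)) :=
        tendsto_const_nhds.add tendsto_one_div_nat
      rw [add_zero] at h2
      have h3 := h2.pow 2
      rw [one_pow] at h3
      exact h3
    have t5 : Tendsto (fun N : ℕ => (1/(N:ℝ))^2) atTop (𝓝 0) := by
      have h3 := tendsto_one_div_nat.pow 2
      rw [show ((0:ℝ))^2 = 0 from by norm_num] at h3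
      exact h3
    have T := ((((tendsto_const_nhds (x := Gsum)).add (t1.const_mul (1/2))).add
        (t2.mul t3)).sub (t4.const_mul (3/4))).add (t5.const_mul (3/4))
    have hval2 : Gsum + (1/2)*0 + 1*0 - (3/4)*1 + (3/4)*0 = Gsum - 3/4 := by ring
    rw [hval2] at T
    exact T.congr' hform
  -- Step D : error limit
  have herr0 : Tendsto (fun N : ℕ => (logZ N - Main N)/(N:ℝ)^2) atTop (𝓝 0) := by
    apply squeeze_zero_norm
      (a := fun N : ℕ => 4*(N:ℝ)*(4*Real.log ((β+n+2)*((N:ℝ)+1)) + 15)/(N:ℝ)^2)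
    · intro N
      rcases Nat.eq_zero_or_pos N with h0 | h0
      · subst h0; simp
      · have hN0 : (0:ℝ) < (N:ℝ) := by exact_mod_cast h0
        have hsq : (0:ℝ) < (N:ℝ)^2 := by positivity
        rw [Real.norm_eq_abs, abs_div, abs_of_pos hsq]
        exact div_le_div_of_nonneg_right (herr N) hsq.le |>.trans (le_refl _)
    · have hC : (0:ℝ) < β+n+2 := by linarith
      have hg : (fun N : ℕ => (16*Real.log (β+n+2) + 60)*(1/(N:ℝ))
          + 16*(Real.log ((N:ℝ)+1)/(N:ℝ)))
          =ᶠ[atTop] (fun N : ℕ => 4*(N:ℝ)*(4*Real.log ((β+n+2)*((N:ℝ)+1)) + 15)/(N:ℝ)^2) := by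
        filter_upwards [eventually_ge_atTop 1] with N hN
        have hN0 : (0:ℝ) < (N:ℝ) := by exact_mod_cast Nat.pos_of_ne_zero (by omega)
        rw [Real.log_mul (ne_of_gt hC) (by positivity)]
        field_simp
        ring
      have T0 := (tendsto_one_div_nat.const_mul (16*Real.log (β+n+2) + 60)).add
        (tendsto_log_nat_div.const_mul 16)
      rw [show (16*Real.log (β+n+2) + 60)*(0:ℝ) + 16*0 = 0 from by ring] at T0
      exact T0.congr' hg
  -- Step E : combine
  have hfinal := (hmain.neg).sub herr0
  have hfun : (fun N : ℕ => -(Main N / (N:ℝ)^2) - (logZ N - Main N)/(N:ℝ)^2)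
      = fun N : ℕ => -logZ N / (N:ℝ)^2 := by
    funext N
    ring
  rw [hfun] at hfinal
  have hval : -(Gsum - 3/4) - 0
      = (β + n + 1) ^ 2 / 2 * Real.log (β + n + 1)
          - (β + n) ^ 2 / 2 * Real.log (β + n)
          - β ^ 2 / 2 * Real.log β
          + (β - 1) ^ 2 / 2 * Real.log (β - 1)
          - (1 + n) ^ 2 / 2 * Real.log (1 + n)
          + n ^ 2 / 2 * Real.log n := by
    rw [hGsum]
    simp only [G]
    rw [add_comm (1:ℝ) n]
    ring
  rw [hval] at hfinal
  exact hfinal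

end NormAsymp


/-- asymptotics of the normalization constant
`Z_N = ∏_{k=0}^{N−1} Γ(N(β−1)+1+k)Γ(Nn+1+k)Γ(k+2)/Γ(N(β+n)+1+k)`:
`lim_{N→∞} (−log Z_N)/N² = E₀` with `E₀` as in eq. (62) of the paper.
(Terms `(c²/2)·log c` with `c = 0` vanish automatically since `Real.log 0 = 0`.) -/
theorem normalization_asymptotics (β n : ℝ) (hβ : 1 ≤ β) (hn : 0 ≤ n) :
    Tendsto
      (fun N : ℕ =>
        -Real.log
            (∏ k ∈ Finset.range N,
              Real.Gamma (N * (β - 1) + 1 + k) * Real.Gamma (N * n + 1 + k) *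
                  Real.Gamma (k + 2) / Real.Gamma (N * (β + n) + 1 + k)) /
          (N : ℝ) ^ 2)
      atTop
      (nhds
        ((β + n + 1) ^ 2 / 2 * Real.log (β + n + 1)
          - (β + n) ^ 2 / 2 * Real.log (β + n)
          - β ^ 2 / 2 * Real.log β
          + (β - 1) ^ 2 / 2 * Real.log (β - 1)
          - (1 + n) ^ 2 / 2 * Real.log (1 + n)
          + n ^ 2 / 2 * Real.log n)) := by
  exact NormAsymp.main β n hβ hn
end

section
/- For all real β ≥ 1 and n₀ ≥ 0, the equilibrium density p₀ integrates to one: ∫_{a₀}^{b₀} (1+β+n₀)·√((x−a₀)(b₀−x)) / (2π x(1−x)) dx = 1. -/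
open Real Set MeasureTheory intervalIntegral

/-- Lower edge of the support of the limiting Jacobi/MANOVA spectral density. -/
noncomputable def a₀ (β n₀ : ℝ) : ℝ :=
  (Real.sqrt (β * (n₀ + β)) - Real.sqrt (1 + n₀)) ^ 2 / (1 + β + n₀) ^ 2

/-- Upper edge of the support of the limiting Jacobi/MANOVA spectral density. -/
noncomputable def b₀ (β n₀ : ℝ) : ℝ :=
  (Real.sqrt (β * (n₀ + β)) + Real.sqrt (1 + n₀)) ^ 2 / (1 + β + n₀) ^ 2

lemma aux_deriv_lin {a b x : ℝ} (hab : a < b) (hx : x ∈ Ioo a b) :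
    HasDerivAt (fun y => Real.arcsin ((y - (a+b)/2)/((b-a)/2)))
      (1 / Real.sqrt ((x-a)*(b-x))) x := by
  have hd : 0 < (b-a)/2 := by linarith [hx.1, hx.2]
  have hd2 : ((b-a)/2)^2 ≠ 0 := pow_ne_zero _ hd.ne'
  have hR2 : 0 < (x-a)*(b-x) := mul_pos (by linarith [hx.1]) (by linarith [hx.2])
  have hR : 0 < Real.sqrt ((x-a)*(b-x)) := Real.sqrt_pos.2 hR2
  set u : ℝ → ℝ := fun y => (y - (a+b)/2)/((b-a)/2) with hu_def
  have hu : HasDerivAt u (1/((b-a)/2)) x := by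
    simpa using (((hasDerivAt_id x).sub_const ((a+b)/2)).div_const ((b-a)/2))
  have key : 1 - u x ^ 2 = (x-a)*(b-x)/(((b-a)/2)^2) := by
    have hux : u x = (x - (a+b)/2)/((b-a)/2) := rfl
    rw [hux, div_pow, eq_div_iff hd2, sub_mul, div_mul_cancel₀ _ hd2]
    ring
  have hpos : 0 < 1 - u x ^ 2 := by rw [key]; positivity
  have h₁ : u x ≠ -1 := by nlinarith [sq_nonneg (u x + 1)]
  have h₂ : u x ≠ 1 := by nlinarith [sq_nonneg (u x - 1)]
  have := (Real.hasDerivAt_arcsin h₁ h₂).comp x hu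
  refine this.congr_deriv (Eq.symm ?_)
  rw [key, Real.sqrt_div hR2.le, Real.sqrt_sq hd.le, one_div_div, div_mul_eq_mul_div,
    mul_one_div, div_div]
  rw [mul_comm, ← div_div, div_self hd.ne']

lemma aux_deriv_frac {a b x : ℝ} (ha : 0 < a) (hab : a < b) (hx : x ∈ Ioo a b) :
    HasDerivAt (fun y => Real.arcsin (((a+b)/2 * y - a*b)/((b-a)/2 * y)))
      (Real.sqrt (a*b) / (x * Real.sqrt ((x-a)*(b-x)))) x := by
  have hx0 : 0 < x := ha.trans hx.1
  have hd : 0 < (b-a)/2 := by linarith [hx.1, hx.2]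
  have hdx : (b-a)/2 * x ≠ 0 := (mul_pos hd hx0).ne'
  have hab0 : 0 < a * b := mul_pos ha (ha.trans hab)
  have hR2 : 0 < (x-a)*(b-x) := mul_pos (by linarith [hx.1]) (by linarith [hx.2])
  have hR : 0 < Real.sqrt ((x-a)*(b-x)) := Real.sqrt_pos.2 hR2
  have hsab : 0 < Real.sqrt (a*b) := Real.sqrt_pos.2 hab0
  set u : ℝ → ℝ := fun y => ((a+b)/2 * y - a*b)/((b-a)/2 * y) with hu_def
  have hu : HasDerivAt u (a*b/((b-a)/2 * x^2)) x := by
    have h1 : HasDerivAt (fun y : ℝ => (a+b)/2 * y - a*b) ((a+b)/2) x := by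
      simpa using ((hasDerivAt_id x).const_mul ((a+b)/2)).sub_const (a*b)
    have h2 : HasDerivAt (fun y : ℝ => (b-a)/2 * y) ((b-a)/2) x := by
      simpa using (hasDerivAt_id x).const_mul ((b-a)/2)
    have := h1.div h2 hdx
    refine this.congr_deriv (Eq.symm ?_)
    field_simp [sub_ne_zero.2 hab.ne', hx0.ne']
    ring
  have key : 1 - u x ^ 2 = a*b*((x-a)*(b-x))/(((b-a)/2 * x)^2) := by
    have hux : u x = ((a+b)/2 * x - a*b)/((b-a)/2 * x) := rfl
    have hdx2 : ((b-a)/2 * x)^2 ≠ 0 := pow_ne_zero _ hdx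
    rw [hux, div_pow, eq_div_iff hdx2, sub_mul, div_mul_cancel₀ _ hdx2]
    ring
  have hpos : 0 < 1 - u x ^ 2 := by rw [key]; positivity
  have h₁ : u x ≠ -1 := by nlinarith [sq_nonneg (u x + 1)]
  have h₂ : u x ≠ 1 := by nlinarith [sq_nonneg (u x - 1)]
  have hcomp := (Real.hasDerivAt_arcsin h₁ h₂).comp x hu
  refine hcomp.congr_deriv (Eq.symm ?_)
  have hs : Real.sqrt (1 - u x ^ 2)
      = Real.sqrt (a*b) * Real.sqrt ((x-a)*(b-x)) / ((b-a)/2 * x) := by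
    rw [key, Real.sqrt_div (by positivity), Real.sqrt_sq (by positivity),
      Real.sqrt_mul hab0.le]
  rw [hs, one_div_div]
  field_simp
  have hne : (2 * (Real.sqrt a * Real.sqrt b * Real.sqrt ((x-a)*(b-x))) * ((b - a) * x ^ 2)) ≠ 0 := by
    have h2 : 0 < Real.sqrt a * Real.sqrt b * Real.sqrt ((x-a)*(b-x)) :=
      mul_pos (mul_pos (Real.sqrt_pos.2 ha) (Real.sqrt_pos.2 (ha.trans hab))) hR
    have h3 : 0 < (b - a) * x ^ 2 := mul_pos (by linarith) (pow_pos hx0 2)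
    positivity
  rw [Real.sq_sqrt hab0.le, mul_div_assoc, div_self (sub_ne_zero.2 hab.ne'), mul_one]

lemma integrable_left_half {a b : ℝ} (ha : 0 ≤ a) (hab : a < b) (hb : b ≤ 1) :
    IntervalIntegrable (fun x => Real.sqrt ((x - a) * (b - x)) / (x * (1 - x)))
      volume a ((a+b)/2) := by
  have ham : a < (a+b)/2 := by linarith
  have hd : 0 < (b-a)/2 := by linarith
  have hsd : 0 < Real.sqrt ((b-a)/2) := Real.sqrt_pos.2 hd
  -- the dominating function
  have base : IntervalIntegrable (fun x : ℝ => x ^ (-(1/2) : ℝ)) volume 0 ((a+b)/2 - a) :=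
    intervalIntegral.intervalIntegrable_rpow' (by norm_num)
  have shift : IntervalIntegrable (fun x : ℝ => (x - a) ^ (-(1/2) : ℝ)) volume a ((a+b)/2) := by
    simpa using base.comp_sub_right a
  have dom := shift.const_mul (1 / Real.sqrt ((b-a)/2))
  apply IntervalIntegrable.mono_fun dom
  · -- measurability
    apply ContinuousOn.aestronglyMeasurable _ measurableSet_uIoc
    rw [uIoc_of_le ham.le]
    apply ContinuousOn.div
    · exact (Real.continuous_sqrt.comp (by continuity)).continuousOn
    · exact (continuous_id.mul (continuous_const.sub continuous_id)).continuousOn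
    · intro x hx
      have hx0 : 0 < x := ha.trans_lt hx.1
      have hx1 : x < 1 := by rcases hx with ⟨h1, h2⟩; nlinarith
      exact (mul_pos hx0 (by linarith)).ne'
  · rw [uIoc_of_le ham.le, Filter.EventuallyLE, ae_restrict_iff' measurableSet_Ioc]
    filter_upwards with x hx
    rcases hx with ⟨hx1, hx2⟩
    have hx0 : 0 < x := ha.trans_lt hx1
    have hxa : 0 < x - a := by linarith
    have hbx : (b - a)/2 ≤ b - x := by linarith
    have hx1' : x < 1 := by nlinarith
    have hP : 0 < (x - a) * (b - x) := mul_pos hxa (by linarith)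
    have hxx : (x - a) * (b - x) ≤ x * (1 - x) :=
      mul_le_mul (by linarith) (by linarith) (by linarith) (by linarith)
    have hgnn : 0 ≤ Real.sqrt ((x - a) * (b - x)) / (x * (1 - x)) :=
      div_nonneg (Real.sqrt_nonneg _) (by nlinarith)
    have hhnn : (0:ℝ) ≤ 1 / Real.sqrt ((b-a)/2) * (x - a) ^ (-(1/2) : ℝ) := by positivity
    rw [Real.norm_of_nonneg hgnn, Real.norm_of_nonneg hhnn]
    have step1 : Real.sqrt ((x - a) * (b - x)) / (x * (1 - x))
        ≤ Real.sqrt ((x - a) * (b - x)) / ((x - a) * (b - x)) :=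
      div_le_div_of_nonneg_left (Real.sqrt_nonneg _) hP hxx
    have step2 : Real.sqrt ((x - a) * (b - x)) / ((x - a) * (b - x))
        = 1 / (Real.sqrt (x - a) * Real.sqrt (b - x)) := by
      rw [Real.sqrt_div_self', Real.sqrt_mul hxa.le]
    have step3 : 1 / (Real.sqrt (x - a) * Real.sqrt (b - x))
        ≤ 1 / (Real.sqrt (x - a) * Real.sqrt ((b-a)/2)) := by
      apply one_div_le_one_div_of_le
      · positivity
      · exact mul_le_mul_of_nonneg_left (Real.sqrt_le_sqrt hbx) (Real.sqrt_nonneg _)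
    have step4 : 1 / (Real.sqrt (x - a) * Real.sqrt ((b-a)/2))
        = 1 / Real.sqrt ((b-a)/2) * (x - a) ^ (-(1/2) : ℝ) := by
      rw [Real.rpow_neg hxa.le, ← Real.sqrt_eq_rpow]
      field_simp
    calc Real.sqrt ((x - a) * (b - x)) / (x * (1 - x))
        ≤ Real.sqrt ((x - a) * (b - x)) / ((x - a) * (b - x)) := step1
      _ = 1 / (Real.sqrt (x - a) * Real.sqrt (b - x)) := step2
      _ ≤ 1 / (Real.sqrt (x - a) * Real.sqrt ((b-a)/2)) := step3
      _ = 1 / Real.sqrt ((b-a)/2) * (x - a) ^ (-(1/2) : ℝ) := step4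

lemma integrable_whole {a b : ℝ} (ha : 0 ≤ a) (hab : a < b) (hb : b ≤ 1) :
    IntervalIntegrable (fun x => Real.sqrt ((x - a) * (b - x)) / (x * (1 - x)))
      volume a b := by
  have left := integrable_left_half ha hab hb
  have right : IntervalIntegrable (fun x => Real.sqrt ((x - a) * (b - x)) / (x * (1 - x)))
      volume ((a+b)/2) b := by
    have h1b : (0:ℝ) ≤ 1 - b := by linarith
    have h1ab : 1 - b < 1 - a := by linarith
    have h1a : 1 - a ≤ 1 := by linarith
    have refl := (integrable_left_half h1b h1ab h1a).comp_sub_left 1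
    have heq : (fun x => Real.sqrt ((1 - x - (1-b)) * ((1-a) - (1 - x))) / ((1 - x) * (1 - (1 - x))))
        = fun x => Real.sqrt ((x - a) * (b - x)) / (x * (1 - x)) := by
      funext x
      rw [show (1 - x - (1-b)) * ((1-a) - (1 - x)) = (x - a) * (b - x) by ring,
        show (1 - x) * (1 - (1 - x)) = x * (1 - x) by ring]
    rw [heq] at refl
    have e1 : 1 - (1 - b) = b := by ring
    have e2 : 1 - ((1-b) + (1-a))/2 = (a+b)/2 := by ring
    rw [e1, e2] at refl
    exact refl.symm
  exact left.trans right

lemma key_integral {a b : ℝ} (ha : 0 ≤ a) (hab : a < b) (hb : b ≤ 1) :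
    ∫ x in a..b, Real.sqrt ((x - a) * (b - x)) / (x * (1 - x))
      = π * (1 - Real.sqrt (a*b) - Real.sqrt ((1-b)*(1-a))) := by
  have hd : 0 < (b-a)/2 := by linarith
  set F : ℝ → ℝ := fun y =>
      Real.arcsin ((y - (a+b)/2)/((b-a)/2))
      - Real.sqrt (a*b) * Real.arcsin (((a+b)/2 * y - a*b)/((b-a)/2 * y))
      + Real.sqrt ((1-b)*(1-a)) *
        Real.arcsin ((((1-b)+(1-a))/2 * (1-y) - (1-b)*(1-a))/(((1-a)-(1-b))/2 * (1-y)))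
    with hF_def
  -- derivative on the interior
  have hderiv : ∀ x ∈ Ioo a b,
      HasDerivAt F (Real.sqrt ((x - a) * (b - x)) / (x * (1 - x))) x := by
    intro x hx
    have hx0 : 0 < x := ha.trans_lt hx.1
    have hx1 : x < 1 := lt_of_lt_of_le hx.2 hb
    have hR2 : 0 < (x-a)*(b-x) := mul_pos (by linarith [hx.1]) (by linarith [hx.2])
    have hR : 0 < Real.sqrt ((x-a)*(b-x)) := Real.sqrt_pos.2 hR2
    have h1 := aux_deriv_lin hab hx
    have h2 : HasDerivAt
        (fun y => Real.sqrt (a*b) * Real.arcsin (((a+b)/2 * y - a*b)/((b-a)/2 * y)))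
        (a*b/(x * Real.sqrt ((x-a)*(b-x)))) x := by
      rcases eq_or_lt_of_le ha with ha0 | ha0
      · simp only [← ha0, zero_mul, Real.sqrt_zero, zero_div]
        exact hasDerivAt_const x 0
      · have := (aux_deriv_frac ha0 hab hx).const_mul (Real.sqrt (a*b))
        refine this.congr_deriv (Eq.symm ?_)
        rw [← mul_div_assoc, Real.mul_self_sqrt (by nlinarith : (0:ℝ) ≤ a*b)]
    have h3 : HasDerivAt
        (fun y => Real.sqrt ((1-b)*(1-a)) *
          Real.arcsin ((((1-b)+(1-a))/2 * (1-y) - (1-b)*(1-a))/(((1-a)-(1-b))/2 * (1-y))))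
        (-((1-b)*(1-a)/((1-x) * Real.sqrt ((x-a)*(b-x))))) x := by
      rcases eq_or_lt_of_le hb with hb1 | hb1
      · simp only [hb1, sub_self, zero_mul, Real.sqrt_zero, zero_div, neg_zero]
        exact hasDerivAt_const x 0
      · have hinner : HasDerivAt (fun y : ℝ => 1 - y) (-1) x := by
          simpa using (hasDerivAt_id x).const_sub 1
        have hmem : (1 - x) ∈ Ioo (1-b) (1-a) := ⟨by linarith [hx.2], by linarith [hx.1]⟩
        have houter := aux_deriv_frac (a := 1-b) (b := 1-a) (by linarith) (by linarith) hmem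
        have hcomp := (houter.comp x hinner).const_mul (Real.sqrt ((1-b)*(1-a)))
        have harg : (1 - x - (1-b)) * ((1-a) - (1 - x)) = (x-a)*(b-x) := by ring
        rw [harg] at hcomp
        refine hcomp.congr_deriv (Eq.symm ?_)
        rw [show Real.sqrt ((1-b)*(1-a)) * (Real.sqrt ((1-b)*(1-a)) / ((1-x) * Real.sqrt ((x-a)*(b-x))) * -1)
            = -((Real.sqrt ((1-b)*(1-a)) * Real.sqrt ((1-b)*(1-a))) / ((1-x) * Real.sqrt ((x-a)*(b-x)))) from by ring,
          Real.mul_self_sqrt (by nlinarith : (0:ℝ) ≤ (1-b)*(1-a))]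
    have htotal := (h1.sub h2).add h3
    refine htotal.congr_deriv (Eq.symm ?_)
    have hRR : Real.sqrt ((x-a)*(b-x)) * Real.sqrt ((x-a)*(b-x)) = (x-a)*(b-x) :=
      Real.mul_self_sqrt hR2.le
    have h1x : (1:ℝ) - x ≠ 0 := by linarith
    field_simp [hx0.ne', hR.ne', h1x]
    linear_combination hRR
  have hb0 : 0 < b := ha.trans_lt hab
  have ha1 : a < 1 := lt_of_lt_of_le hab hb
  have hFcont : ContinuousOn F (Icc a b) := by
    have hc1 : ContinuousOn (fun y : ℝ => Real.arcsin ((y - (a+b)/2)/((b-a)/2))) (Icc a b) :=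
      (Real.continuous_arcsin.comp
        ((continuous_id.sub continuous_const).div_const _)).continuousOn
    have hc2 : ContinuousOn (fun y : ℝ =>
        Real.sqrt (a*b) * Real.arcsin (((a+b)/2 * y - a*b)/((b-a)/2 * y))) (Icc a b) := by
      rcases eq_or_lt_of_le ha with ha0 | ha0
      · apply (continuousOn_const (c := (0:ℝ))).congr
        intro y hy
        simp [← ha0]
      · apply ContinuousOn.mul continuousOn_const
        apply Real.continuous_arcsin.comp_continuousOn
        apply ContinuousOn.div
        · exact (by continuity : Continuous fun y : ℝ => (a+b)/2 * y - a*b).continuousOn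
        · exact (by continuity : Continuous fun y : ℝ => (b-a)/2 * y).continuousOn
        · intro y hy
          exact (mul_pos hd (lt_of_lt_of_le ha0 hy.1)).ne'
    have hc3 : ContinuousOn (fun y : ℝ => Real.sqrt ((1-b)*(1-a)) *
        Real.arcsin ((((1-b)+(1-a))/2 * (1-y) - (1-b)*(1-a))/(((1-a)-(1-b))/2 * (1-y))))
        (Icc a b) := by
      rcases eq_or_lt_of_le hb with hb1 | hb1
      · apply (continuousOn_const (c := (0:ℝ))).congr
        intro y hy
        simp [hb1]
      · apply ContinuousOn.mul continuousOn_const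
        apply Real.continuous_arcsin.comp_continuousOn
        apply ContinuousOn.div
        · exact (by continuity :
            Continuous fun y : ℝ => ((1-b)+(1-a))/2 * (1-y) - (1-b)*(1-a)).continuousOn
        · exact (by continuity : Continuous fun y : ℝ => ((1-a)-(1-b))/2 * (1-y)).continuousOn
        · intro y hy
          have h1 : 0 < (1-a-(1-b))/2 := by linarith
          have h2 : 0 < 1 - y := by rcases hy with ⟨hy1, hy2⟩; linarith
          exact (mul_pos h1 h2).ne'
    exact (hc1.sub hc2).add hc3
  have hFTC := intervalIntegral.integral_eq_sub_of_hasDeriv_right_of_le hab.le hFcont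
      (fun x hx => (hderiv x hx).hasDerivWithinAt) (integrable_whole ha hab hb)
  rw [hFTC]
  have hFb : F b = π/2 - Real.sqrt (a*b) * (π/2)
      + Real.sqrt ((1-b)*(1-a)) * (-(π/2)) := by
    have e1 : (b - (a+b)/2)/((b-a)/2) = 1 := by
      rw [div_eq_one_iff_eq hd.ne']; ring
    have e2 : ((a+b)/2 * b - a*b)/((b-a)/2 * b) = 1 := by
      rw [div_eq_one_iff_eq (mul_pos hd hb0).ne']; ring
    rcases eq_or_lt_of_le hb with hb1 | hb1
    · rw [hF_def]
      simp only [e1, e2, Real.arcsin_one]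
      rw [hb1]
      simp
    · have e3 : (((1-b)+(1-a))/2 * (1-b) - (1-b)*(1-a))/(((1-a)-(1-b))/2 * (1-b)) = -1 := by
        rw [div_eq_iff (mul_pos (by linarith : (0:ℝ) < (1-a-(1-b))/2)
          (by linarith : (0:ℝ) < 1-b)).ne']
        ring
      rw [hF_def]
      simp only [e1, e2, e3, Real.arcsin_one, Real.arcsin_neg_one]
  have hFa : F a = -(π/2) - Real.sqrt (a*b) * (-(π/2))
      + Real.sqrt ((1-b)*(1-a)) * (π/2) := by
    have e1 : (a - (a+b)/2)/((b-a)/2) = -1 := by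
      rw [div_eq_iff hd.ne']; ring
    have e3 : (((1-b)+(1-a))/2 * (1-a) - (1-b)*(1-a))/(((1-a)-(1-b))/2 * (1-a)) = 1 := by
      rw [div_eq_one_iff_eq (mul_pos (by linarith : (0:ℝ) < (1-a-(1-b))/2)
        (by linarith : (0:ℝ) < 1-a)).ne']
      ring
    rcases eq_or_lt_of_le ha with ha0 | ha0
    · rw [hF_def]
      simp only [e1, e3, Real.arcsin_one, Real.arcsin_neg_one]
      rw [← ha0]
      simp
    · have e2 : ((a+b)/2 * a - a*b)/((b-a)/2 * a) = -1 := by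
        rw [div_eq_iff (mul_pos hd ha0).ne']
        ring
      rw [hF_def]
      simp only [e1, e2, e3, Real.arcsin_one, Real.arcsin_neg_one]
  rw [hFb, hFa]
  ring

/-- the equilibrium density
`p₀(x) = (1+β+n₀)√((x−a₀)(b₀−x))/(2πx(1−x))` integrates to one over `(a₀, b₀)`. -/
theorem equilibrium_density_normalized (β n₀ : ℝ) (hβ : 1 ≤ β) (hn : 0 ≤ n₀) :
    (∫ x in (a₀ β n₀)..(b₀ β n₀),
      (1 + β + n₀) * Real.sqrt ((x - a₀ β n₀) * (b₀ β n₀ - x)) /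
        (2 * Real.pi * x * (1 - x))) = 1 := by
  have hc : (0:ℝ) < 1 + β + n₀ := by linarith
  set s := Real.sqrt (β * (n₀ + β)) with hs_def
  set t := Real.sqrt (1 + n₀) with ht_def
  have hs2 : s^2 = β * (n₀ + β) := Real.sq_sqrt (by nlinarith)
  have ht2 : t^2 = 1 + n₀ := Real.sq_sqrt (by linarith)
  have hs0 : 0 < s := Real.sqrt_pos.2 (by nlinarith)
  have ht0 : 0 < t := Real.sqrt_pos.2 (by linarith)
  have ha_def : a₀ β n₀ = (s - t)^2/(1+β+n₀)^2 := rfl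
  have hb_def : b₀ β n₀ = (s + t)^2/(1+β+n₀)^2 := rfl
  have hc2 : (0:ℝ) < (1+β+n₀)^2 := pow_pos hc 2
  have ha0 : 0 ≤ a₀ β n₀ := by rw [ha_def]; positivity
  have hab : a₀ β n₀ < b₀ β n₀ := by
    rw [ha_def, hb_def, div_lt_div_iff_of_pos_right hc2]
    nlinarith [mul_pos hs0 ht0]
  have hst2 : (s*t)^2 = (β*(n₀+β))*(1+n₀) := by rw [mul_pow, hs2, ht2]
  have hS0 : 0 < (1+β+n₀)^2 - (β*(n₀+β)) - (1+n₀) := by nlinarith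
  have hp0 : 0 ≤ s*t := (mul_pos hs0 ht0).le
  have hS : 2*(s*t) ≤ (1+β+n₀)^2 - (β*(n₀+β)) - (1+n₀) := by
    nlinarith [hst2, sq_nonneg (n₀*(1+β+n₀)), hS0, hp0]
  have hb1 : b₀ β n₀ ≤ 1 := by
    rw [hb_def, div_le_one hc2]
    nlinarith [hS, hs2, ht2]
  have v1 : Real.sqrt (a₀ β n₀ * b₀ β n₀) = (β-1)/(1+β+n₀) := by
    have e : a₀ β n₀ * b₀ β n₀ = ((β-1)/(1+β+n₀))^2 := by
      rw [ha_def, hb_def, div_mul_div_comm]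
      rw [show (s-t)^2*(s+t)^2 = (s^2)^2 - 2*(s^2)*(t^2) + (t^2)^2 from by ring, hs2, ht2]
      field_simp
      ring
    rw [e, Real.sqrt_sq (div_nonneg (by linarith) hc.le)]
  have v2 : Real.sqrt ((1 - b₀ β n₀) * (1 - a₀ β n₀)) = n₀/(1+β+n₀) := by
    have e : (1 - b₀ β n₀) * (1 - a₀ β n₀) = (n₀/(1+β+n₀))^2 := by
      rw [ha_def, hb_def]
      rw [show (1 - (s+t)^2/(1+β+n₀)^2) * (1 - (s-t)^2/(1+β+n₀)^2)
          = (((1+β+n₀)^2 - (s+t)^2) * ((1+β+n₀)^2 - (s-t)^2))/((1+β+n₀)^2*(1+β+n₀)^2)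
          from by field_simp]
      rw [show ((1+β+n₀)^2 - (s+t)^2) * ((1+β+n₀)^2 - (s-t)^2)
          = ((1+β+n₀)^2)^2 - 2*(1+β+n₀)^2*(s^2+t^2) + ((s^2)^2 - 2*(s^2)*(t^2) + (t^2)^2)
          from by ring, hs2, ht2]
      field_simp
      ring
    rw [e, Real.sqrt_sq (by positivity)]
  have key := key_integral ha0 hab hb1
  have hptwise : ∀ x : ℝ, (1 + β + n₀) * Real.sqrt ((x - a₀ β n₀) * (b₀ β n₀ - x)) /
        (2 * Real.pi * x * (1 - x))
      = ((1+β+n₀)/(2*Real.pi)) *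
        (Real.sqrt ((x - a₀ β n₀) * (b₀ β n₀ - x)) / (x * (1 - x))) := by
    intro x
    simp only [div_eq_mul_inv, mul_inv]
    ring
  simp only [hptwise]
  rw [intervalIntegral.integral_const_mul, key, v1, v2]
  field_simp
  ring
end

section
/- For every real ρ > 0, ∫₀¹ log(1+ρx) / (π·√(x(1−x))) dx = 2·log((1+√(1+ρ))/2). -/
open Real MeasureTheory intervalIntegral Set

lemma meas_f : Measurable (fun x : ℝ => 1 / Real.sqrt (x * (1 - x))) := by
  fun_prop

lemma aux_bound {x : ℝ} (hx0 : 0 < x) (hx1 : x ≤ 1/2) :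
    1 / Real.sqrt (x * (1 - x)) ≤ Real.sqrt 2 * x ^ (-(1/2) : ℝ) := by
  have h1 : (0:ℝ) < 1 - x := by linarith
  have hxx : x / 2 ≤ x * (1 - x) := by nlinarith
  have hs : Real.sqrt (x/2) ≤ Real.sqrt (x * (1-x)) := Real.sqrt_le_sqrt hxx
  have hpos : 0 < Real.sqrt (x/2) := Real.sqrt_pos.mpr (by linarith)
  have h2 : 1 / Real.sqrt (x * (1-x)) ≤ 1 / Real.sqrt (x/2) :=
    one_div_le_one_div_of_le hpos hs
  refine h2.trans (le_of_eq ?_)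
  rw [Real.sqrt_div hx0.le, Real.rpow_neg hx0.le, ← Real.sqrt_eq_rpow]
  have h3 : 0 < Real.sqrt x := Real.sqrt_pos.mpr hx0
  have h4 : 0 < Real.sqrt 2 := by positivity
  field_simp


lemma int_half1 : IntervalIntegrable (fun x : ℝ => 1 / Real.sqrt (x * (1 - x))) volume 0 (1/2) := by
  have hg : IntervalIntegrable (fun x : ℝ => Real.sqrt 2 * x ^ (-(1/2) : ℝ)) volume 0 (1/2) :=
    (intervalIntegral.intervalIntegrable_rpow' (by norm_num)).const_mul _
  apply hg.mono_fun meas_f.aestronglyMeasurable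
  filter_upwards [ae_restrict_mem measurableSet_uIoc] with x hx
  rw [Set.uIoc_of_le (by norm_num)] at hx
  obtain ⟨hx0, hx1⟩ := hx
  rw [Real.norm_eq_abs, Real.norm_eq_abs, abs_of_nonneg (by positivity),
    abs_of_nonneg (by positivity)]
  exact aux_bound hx0 hx1

lemma int_arcsine : IntervalIntegrable (fun x : ℝ => 1 / Real.sqrt (x * (1 - x))) volume 0 1 := by
  refine int_half1.trans ?_
  have h2 : IntervalIntegrable (fun x : ℝ => 1 / Real.sqrt ((1-x) * (1 - (1-x)))) volume (1-0) (1 - (1/2)) := int_half1.comp_sub_left 1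
  norm_num at h2
  apply h2.symm.congr
  intro x _
  ring_nf

lemma deriv_arcsine {x : ℝ} (hx0 : 0 < x) (hx1 : x < 1) :
    HasDerivAt (fun y : ℝ => Real.arcsin (2*y - 1)) (1 / Real.sqrt (x * (1-x))) x := by
  have h1 : HasDerivAt (fun y : ℝ => 2*y - 1) 2 x := by
    simpa using ((hasDerivAt_id x).const_mul 2).sub_const 1
  have h2 : HasDerivAt Real.arcsin (1 / Real.sqrt (1 - (2*x-1)^2)) (2*x-1) :=
    Real.hasDerivAt_arcsin (by intro h; linarith) (by intro h; linarith)
  have := h2.comp x h1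
  refine this.congr_deriv (Eq.symm ?_)
  have key : 1 - (2*x-1)^2 = 4 * (x * (1-x)) := by ring
  have h4 : Real.sqrt 4 = 2 := by
    rw [show (4:ℝ) = 2^2 by norm_num, Real.sqrt_sq (by norm_num)]
  rw [key, Real.sqrt_mul (by norm_num : (0:ℝ) ≤ 4), h4]
  have hs : 0 < Real.sqrt (x * (1-x)) := Real.sqrt_pos.mpr (by nlinarith)
  field_simp

lemma I1 : ∫ x in (0:ℝ)..1, 1 / Real.sqrt (x * (1-x)) = π := by
  have := intervalIntegral.integral_eq_sub_of_hasDerivAt_of_le (f := fun y : ℝ => Real.arcsin (2*y - 1))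
    (f' := fun x : ℝ => 1 / Real.sqrt (x * (1-x))) (by norm_num)
    ((Real.continuous_arcsin.comp (by continuity)).continuousOn)
    (fun x hx => deriv_arcsine hx.1 hx.2) int_arcsine
  rw [this]
  norm_num [Real.arcsin_one, Real.arcsin_neg_one]

lemma int_f2 {ρ : ℝ} (hρ : 0 < ρ) :
    IntervalIntegrable (fun x : ℝ => 1 / ((1 + ρ*x) * Real.sqrt (x * (1-x)))) volume 0 1 := by
  have hm : Measurable (fun x : ℝ => 1 / ((1 + ρ*x) * Real.sqrt (x * (1-x)))) := by
    fun_prop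
  apply int_arcsine.mono_fun hm.aestronglyMeasurable
  filter_upwards [ae_restrict_mem measurableSet_uIoc] with x hx
  rw [Set.uIoc_of_le (by norm_num)] at hx
  obtain ⟨hx0, hx1⟩ := hx
  have h1 : (1:ℝ) ≤ 1 + ρ*x := by nlinarith
  rw [Real.norm_eq_abs, Real.norm_eq_abs, abs_of_nonneg (by positivity),
    abs_of_nonneg (by positivity)]
  rcases eq_or_lt_of_le (Real.sqrt_nonneg (x*(1-x))) with h|h
  · rw [← h]; simp
  · rw [div_le_div_iff₀ (by positivity) h]
    nlinarith [h]

lemma deriv_G {ρ : ℝ} (hρ : 0 < ρ) {x : ℝ} (hx0 : 0 < x) (hx1 : x < 1) :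
    HasDerivAt (fun y : ℝ => (1/Real.sqrt (1+ρ)) * Real.arccos ((1 - (2+ρ)*y)/(1+ρ*y)))
      (1 / ((1 + ρ*x) * Real.sqrt (x * (1-x)))) x := by
  have hd : (0:ℝ) < 1 + ρ*x := by nlinarith
  have hs : 0 < Real.sqrt (1+ρ) := Real.sqrt_pos.mpr (by linarith)
  have hs2 : Real.sqrt (1+ρ) ^ 2 = 1 + ρ := Real.sq_sqrt (by linarith)
  set v : ℝ := (1 - (2+ρ)*x)/(1+ρ*x) with hv
  have hv1 : v < 1 := by
    rw [hv, div_lt_one hd]; nlinarith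
  have hvm : -1 < v := by
    rw [hv, lt_div_iff₀ hd]; nlinarith
  have hV : HasDerivAt (fun y : ℝ => (1 - (2+ρ)*y)/(1+ρ*y))
      ((-(2+ρ)*(1+ρ*x) - (1-(2+ρ)*x)*ρ)/(1+ρ*x)^2) x := by
    have := (((hasDerivAt_id x).const_mul (2+ρ)).const_sub 1).div
      (((hasDerivAt_id x).const_mul ρ).const_add 1) (ne_of_gt hd)
    refine this.congr_deriv ?_; simp only [id]; ring
  have hA : HasDerivAt Real.arccos (-(1/Real.sqrt (1 - v^2))) v :=
    Real.hasDerivAt_arccos (by linarith) (by linarith)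
  have := ((hA.comp x hV).const_mul (1/Real.sqrt (1+ρ)))
  refine this.congr_deriv (Eq.symm ?_)
  have key : 1 - v^2 = 4*(1+ρ)*(x*(1-x))/(1+ρ*x)^2 := by
    rw [hv]; field_simp; ring
  have hxx : 0 < x*(1-x) := by nlinarith
  have hsx : 0 < Real.sqrt (x*(1-x)) := Real.sqrt_pos.mpr hxx
  have hsq : Real.sqrt (1 - v^2) = 2*Real.sqrt (1+ρ)*Real.sqrt (x*(1-x))/(1+ρ*x) := by
    have heq : (2*Real.sqrt (1+ρ)*Real.sqrt (x*(1-x))/(1+ρ*x))^2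
        = 4*(1+ρ)*(x*(1-x))/(1+ρ*x)^2 := by
      rw [div_pow, mul_pow, mul_pow, hs2, Real.sq_sqrt hxx.le]; ring
    rw [key, ← heq, Real.sqrt_sq (by positivity)]
  rw [hsq, show (-(2+ρ)*(1+ρ*x) - (1-(2+ρ)*x)*ρ) = -(2+2*ρ) by ring]
  generalize hst : Real.sqrt (x*(1-x)) = st at *
  generalize hss : Real.sqrt (1+ρ) = ss at *
  have h2 : st * st = x*(1-x) := by rw [← hst]; exact Real.mul_self_sqrt hxx.le
  have h3 : ss * ss = 1+ρ := by rw [← hss]; exact Real.mul_self_sqrt (by linarith)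
  field_simp
  linear_combination h3

lemma I2 {ρ : ℝ} (hρ : 0 < ρ) :
    ∫ x in (0:ℝ)..1, 1 / ((1 + ρ*x) * Real.sqrt (x * (1-x))) = π / Real.sqrt (1+ρ) := by
  have hcont : ContinuousOn (fun y : ℝ => (1/Real.sqrt (1+ρ)) * Real.arccos ((1 - (2+ρ)*y)/(1+ρ*y))) (Set.Icc 0 1) := by
    apply ContinuousOn.mul continuousOn_const
    apply Real.continuous_arccos.comp_continuousOn
    apply ContinuousOn.div (by fun_prop) (by fun_prop)
    intro x hx
    obtain ⟨h0, h1⟩ := hx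
    nlinarith
  have := intervalIntegral.integral_eq_sub_of_hasDerivAt_of_le (by norm_num) hcont
    (fun x hx => deriv_G hρ hx.1 hx.2) (int_f2 hρ)
  rw [this]
  norm_num
  rw [show (1 - (2+ρ))/(1+ρ) = -1 by
    rw [div_eq_iff (by linarith : (1:ℝ)+ρ ≠ 0)]; ring, Real.arccos_neg_one]
  rw [inv_mul_eq_div]

lemma int_flog {ρ : ℝ} (hρ : 0 ≤ ρ) :
    IntervalIntegrable (fun x : ℝ => Real.log (1 + ρ*x) / (π * Real.sqrt (x * (1-x)))) volume 0 1 := by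
  have hm : Measurable (fun x : ℝ => Real.log (1 + ρ*x) / (π * Real.sqrt (x * (1-x)))) := by
    exact (Real.measurable_log.comp (by fun_prop : Measurable fun x : ℝ => 1 + ρ*x)).div
      (by fun_prop : Measurable fun x : ℝ => π * Real.sqrt (x*(1-x)))
  have hg : IntervalIntegrable (fun x : ℝ => (Real.log (1+ρ) / π) * (1 / Real.sqrt (x*(1-x)))) volume 0 1 :=
    int_arcsine.const_mul _
  apply hg.mono_fun hm.aestronglyMeasurable
  filter_upwards [ae_restrict_mem measurableSet_uIoc] with x hx
  rw [Set.uIoc_of_le (by norm_num)] at hx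
  obtain ⟨hx0, hx1⟩ := hx
  have h1 : (1:ℝ) ≤ 1 + ρ*x := by nlinarith
  have h2 : 1 + ρ*x ≤ 1 + ρ := by nlinarith
  have hl1 : 0 ≤ Real.log (1+ρ*x) := Real.log_nonneg h1
  have hl2 : Real.log (1+ρ*x) ≤ Real.log (1+ρ) := Real.log_le_log (by linarith) h2
  have hgnn : (0:ℝ) ≤ Real.log (1+ρ) / π * (1 / Real.sqrt (x*(1-x))) :=
    mul_nonneg (div_nonneg (Real.log_nonneg (by linarith)) Real.pi_pos.le) (by positivity)
  rw [Real.norm_eq_abs, Real.norm_eq_abs, abs_of_nonneg (by positivity),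
    abs_of_nonneg hgnn]
  rcases eq_or_ne (Real.sqrt (x*(1-x))) 0 with h|h
  · simp [h]
  · have ht : 0 < Real.sqrt (x*(1-x)) := lt_of_le_of_ne (Real.sqrt_nonneg _) (Ne.symm h)
    have : Real.log (1+ρ) / π * (1 / Real.sqrt (x*(1-x)))
        = Real.log (1+ρ) / (π * Real.sqrt (x*(1-x))) := by field_simp
    rw [this]
    gcongr

lemma hasDerivAt_F {ρ : ℝ} (hρ : 0 < ρ) :
    HasDerivAt (fun r : ℝ => ∫ x in (0:ℝ)..1, Real.log (1 + r*x) / (π * Real.sqrt (x * (1-x))))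
      ((1/ρ) * (1 - 1/Real.sqrt (1+ρ))) ρ := by
  set F' : ℝ → ℝ → ℝ := fun r x => x / ((1 + r*x) * (π * Real.sqrt (x * (1-x)))) with hF'
  have key := intervalIntegral.hasDerivAt_integral_of_dominated_loc_of_deriv_le
    (F := fun r x => Real.log (1 + r*x) / (π * Real.sqrt (x * (1-x)))) (F' := F')
    (x₀ := ρ) (s := Metric.ball ρ ρ) (a := 0) (b := 1) (μ := volume)
    (bound := fun x => 1 / Real.sqrt (x*(1-x))) (Metric.ball_mem_nhds ρ hρ)
    ?_ (int_flog hρ.le) ?_ ?_ int_arcsine ?_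
  · obtain ⟨-, hd⟩ := key
    refine hd.congr_deriv (Eq.symm ?_)
    have hcongr : ∀ x ∈ Set.uIcc (0:ℝ) 1, F' ρ x
        = (1/(ρ*π)) * (1/Real.sqrt (x*(1-x)) - 1/((1 + ρ*x) * Real.sqrt (x*(1-x)))) := by
      intro x hx
      rw [Set.uIcc_of_le (by norm_num)] at hx
      obtain ⟨hx0, hx1⟩ := hx
      have hd0 : (0:ℝ) < 1 + ρ*x := by nlinarith
      simp only [hF']
      rcases eq_or_ne (Real.sqrt (x*(1-x))) 0 with h|h
      · simp [h]
      · have hd0' : (1 + ρ*x) ≠ 0 := ne_of_gt hd0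
        generalize Real.sqrt (x*(1-x)) = st at *
        field_simp
        ring
    rw [intervalIntegral.integral_congr hcongr, intervalIntegral.integral_const_mul,
      intervalIntegral.integral_sub int_arcsine (int_f2 hρ), I1, I2 hρ]
    have hs : 0 < Real.sqrt (1+ρ) := Real.sqrt_pos.mpr (by linarith)
    field_simp
  · filter_upwards with r
    exact ((Real.measurable_log.comp (by fun_prop : Measurable fun x : ℝ => 1 + r*x)).div
      (by fun_prop : Measurable fun x : ℝ => π * Real.sqrt (x*(1-x)))).aestronglyMeasurable
  · exact (by fun_prop : Measurable (F' ρ)).aestronglyMeasurable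
  · filter_upwards with x hx r hr
    rw [Set.uIoc_of_le (by norm_num)] at hx
    obtain ⟨hx0, hx1⟩ := hx
    rw [Metric.mem_ball, Real.dist_eq, abs_lt] at hr
    have hrpos : 0 < r := by linarith
    have hd0 : (1:ℝ) ≤ 1 + r*x := by nlinarith
    simp only [hF']
    rw [Real.norm_eq_abs, abs_of_nonneg (by positivity)]
    rcases eq_or_lt_of_le (Real.sqrt_nonneg (x*(1-x))) with h|h
    · simp [← h]
    · rw [div_le_div_iff₀ (by positivity) h]
      have hπ : (1:ℝ) ≤ π := by linarith [Real.pi_gt_three]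
      have k1 : x * Real.sqrt (x*(1-x)) ≤ Real.sqrt (x*(1-x)) := by nlinarith
      have k2 : (1:ℝ) * (1 * Real.sqrt (x*(1-x))) ≤ (1+r*x) * (π * Real.sqrt (x*(1-x))) := by
        apply mul_le_mul hd0 (by nlinarith) (by positivity) (by linarith)
      rw [one_mul, one_mul] at k2
      linarith
  · filter_upwards with x hx r hr
    rw [Set.uIoc_of_le (by norm_num)] at hx
    obtain ⟨hx0, hx1⟩ := hx
    rw [Metric.mem_ball, Real.dist_eq, abs_lt] at hr
    have hrpos : 0 < r := by linarith
    simp only [hF']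
    rcases eq_or_lt_of_le hx1 with hx1'|hx1'
    · -- x = 1 : the function is constant 0
      have ht : Real.sqrt (x*(1-x)) = 0 := by rw [← hx1']; norm_num
      have hzero : (fun r : ℝ => Real.log (1 + r*x) / (π * Real.sqrt (x * (1-x)))) = fun _ => 0 := by
        funext r; rw [ht]; simp
      rw [hzero]
      have : x / ((1 + r*x) * (π * Real.sqrt (x * (1-x)))) = 0 := by rw [ht]; simp
      rw [this]
      exact hasDerivAt_const _ _
    · have ht : 0 < Real.sqrt (x*(1-x)) := Real.sqrt_pos.mpr (by nlinarith)
      have hd0 : (0:ℝ) < 1 + r*x := by nlinarith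
      have h1 : HasDerivAt (fun r : ℝ => 1 + r*x) x r := by
        simpa using ((hasDerivAt_id r).mul_const x).const_add 1
      have h2 : HasDerivAt (fun r : ℝ => Real.log (1 + r*x)) ((1+r*x)⁻¹ * x) r := by
        exact (Real.hasDerivAt_log (ne_of_gt hd0)).comp r h1
      have h3 := h2.div_const (π * Real.sqrt (x * (1-x)))
      refine h3.congr_deriv (Eq.symm ?_)
      field_simp

lemma hasDerivAt_g {ρ : ℝ} (hρ : 0 < ρ) :
    HasDerivAt (fun r : ℝ => 2 * Real.log ((1 + Real.sqrt (1+r)) / 2))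
      ((1/ρ) * (1 - 1/Real.sqrt (1+ρ))) ρ := by
  have h0 : (0:ℝ) < 1 + ρ := by linarith
  have hs : 0 < Real.sqrt (1+ρ) := Real.sqrt_pos.mpr h0
  have h1 : HasDerivAt (fun r : ℝ => 1 + r) 1 ρ := by
    simpa using (hasDerivAt_id ρ).const_add 1
  have h2 : HasDerivAt (fun r : ℝ => Real.sqrt (1+r)) (1 / (2*Real.sqrt (1+ρ))) ρ := by
    have := (Real.hasDerivAt_sqrt (ne_of_gt h0)).comp ρ h1
    exact this.congr_deriv (mul_one _)
  have h3 : HasDerivAt (fun r : ℝ => (1 + Real.sqrt (1+r)) / 2)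
      (1 / (2*Real.sqrt (1+ρ)) / 2) ρ := (h2.const_add 1).div_const 2
  have hu : (0:ℝ) < (1 + Real.sqrt (1+ρ)) / 2 := by positivity
  have h4 : HasDerivAt (fun r : ℝ => Real.log ((1 + Real.sqrt (1+r)) / 2))
      (((1 + Real.sqrt (1+ρ)) / 2)⁻¹ * (1 / (2*Real.sqrt (1+ρ)) / 2)) ρ := by
    exact (Real.hasDerivAt_log (ne_of_gt hu)).comp ρ h3
  have h5 := h4.const_mul 2
  refine h5.congr_deriv (Eq.symm ?_)
  have hsq : Real.sqrt (1+ρ) * Real.sqrt (1+ρ) = 1 + ρ := Real.mul_self_sqrt h0.le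
  generalize hss : Real.sqrt (1+ρ) = ss at *
  have h1s : (1:ℝ) + ss ≠ 0 := by positivity
  field_simp
  linear_combination hsq

lemma F_le_log {a : ℝ} (ha : 0 < a) :
    (∫ x in (0:ℝ)..1, Real.log (1 + a*x) / (π * Real.sqrt (x * (1-x)))) ≤ Real.log (1+a) := by
  have hle : ∀ x ∈ Set.Icc (0:ℝ) 1, Real.log (1 + a*x) / (π * Real.sqrt (x * (1-x)))
      ≤ (Real.log (1+a)/π) * (1 / Real.sqrt (x*(1-x))) := by
    intro x hx
    obtain ⟨hx0, hx1⟩ := hx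
    have h1 : (1:ℝ) ≤ 1 + a*x := by nlinarith
    have h2 : 1 + a*x ≤ 1 + a := by nlinarith
    have hl2 : Real.log (1+a*x) ≤ Real.log (1+a) := Real.log_le_log (by linarith) h2
    rcases eq_or_ne (Real.sqrt (x*(1-x))) 0 with h|h
    · simp [h]
    · have ht : 0 < Real.sqrt (x*(1-x)) := lt_of_le_of_ne (Real.sqrt_nonneg _) (Ne.symm h)
      have he : Real.log (1+a) / π * (1 / Real.sqrt (x*(1-x)))
          = Real.log (1+a) / (π * Real.sqrt (x*(1-x))) := by field_simp
      rw [he]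
      gcongr
  have hmono := intervalIntegral.integral_mono_on (by norm_num : (0:ℝ) ≤ 1)
    (int_flog ha.le) (int_arcsine.const_mul _) hle
  calc (∫ x in (0:ℝ)..1, Real.log (1 + a*x) / (π * Real.sqrt (x * (1-x))))
      ≤ ∫ x in (0:ℝ)..1, (Real.log (1+a)/π) * (1 / Real.sqrt (x*(1-x))) := hmono
    _ = (Real.log (1+a)/π) * π := by
        rw [intervalIntegral.integral_const_mul, I1]
    _ = Real.log (1+a) := by
        field_simp

lemma F_nonneg {a : ℝ} (ha : 0 < a) :
    0 ≤ ∫ x in (0:ℝ)..1, Real.log (1 + a*x) / (π * Real.sqrt (x * (1-x))) := by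
  apply intervalIntegral.integral_nonneg (by norm_num)
  intro x hx
  obtain ⟨hx0, hx1⟩ := hx
  have h1 : (1:ℝ) ≤ 1 + a*x := by nlinarith
  exact div_nonneg (Real.log_nonneg h1) (by positivity)

/-- the mutual-information integral of the arcsine density:
`∫₀¹ log(1+ρx)/(π√(x(1−x))) dx = 2 log((1+√(1+ρ))/2)` (eq. (42) with `k = 0`). -/
theorem ergodic_rate_arcsine (ρ : ℝ) (hρ : 0 < ρ) :
    (∫ x in (0:ℝ)..1, Real.log (1 + ρ * x) / (Real.pi * Real.sqrt (x * (1 - x)))) =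
      2 * Real.log ((1 + Real.sqrt (1 + ρ)) / 2) := by
  set F : ℝ → ℝ := fun r => ∫ x in (0:ℝ)..1, Real.log (1 + r*x) / (π * Real.sqrt (x * (1-x))) with hF
  set g : ℝ → ℝ := fun r => 2 * Real.log ((1 + Real.sqrt (1+r)) / 2) with hg
  have hconst : ∀ a ∈ Set.Ioo (0:ℝ) ρ, F a - g a = F ρ - g ρ := by
    intro a ha
    obtain ⟨ha0, haρ⟩ := ha
    have hderiv : ∀ r ∈ Set.uIcc a ρ, HasDerivAt (fun r => F r - g r) 0 r := by
      intro r hr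
      rw [Set.uIcc_of_le haρ.le] at hr
      have hr0 : 0 < r := lt_of_lt_of_le ha0 hr.1
      have := (hasDerivAt_F hr0).sub (hasDerivAt_g hr0)
      exact this.congr_deriv (sub_self _)
    have := intervalIntegral.integral_eq_sub_of_hasDerivAt hderiv
      (_root_.intervalIntegrable_const (c := (0:ℝ)))
    simp only [intervalIntegral.integral_const, smul_zero] at this
    have h0 := this.symm
    linarith [h0]
  have hFlim : Filter.Tendsto F (nhdsWithin 0 (Set.Ioi 0)) (nhds 0) := by
    refine tendsto_of_tendsto_of_tendsto_of_le_of_le' (g := fun _ : ℝ => (0:ℝ))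
      (h := fun a : ℝ => Real.log (1+a)) tendsto_const_nhds ?_ ?_ ?_
    · -- upper function tendsto : log(1+a) → 0
      have hc : Filter.Tendsto (fun a : ℝ => Real.log (1+a)) (nhds 0) (nhds 0) := by
        have hca : ContinuousAt (fun a : ℝ => Real.log (1+a)) 0 := by
          apply (Real.continuousAt_log (by norm_num)).comp
          fun_prop
        simpa using hca.tendsto
      exact hc.mono_left nhdsWithin_le_nhds
    · filter_upwards [self_mem_nhdsWithin] with a ha
      exact F_nonneg ha
    · filter_upwards [self_mem_nhdsWithin] with a ha
      exact F_le_log ha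
  have hglim : Filter.Tendsto g (nhdsWithin 0 (Set.Ioi 0)) (nhds 0) := by
    have hca : ContinuousAt g 0 := by
      apply ContinuousAt.mul continuousAt_const
      apply (Real.continuousAt_log ?_).comp
      · fun_prop
      · norm_num
    have hg0 : g 0 = 0 := by simp [hg, Real.sqrt_one]
    have h' := hca.tendsto.mono_left (nhdsWithin_le_nhds (s := Set.Ioi (0:ℝ)))
    rwa [hg0] at h'
  have hdiff : Filter.Tendsto (fun a => F a - g a) (nhdsWithin 0 (Set.Ioi 0)) (nhds 0) := by
    simpa using hFlim.sub hglim
  have hconst' : Filter.Tendsto (fun a => F a - g a) (nhdsWithin 0 (Set.Ioi 0)) (nhds (F ρ - g ρ)) := by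
    apply Filter.Tendsto.congr' _ tendsto_const_nhds
    filter_upwards [Ioo_mem_nhdsGT_of_mem (Set.mem_Ico.mpr ⟨le_refl 0, hρ⟩)] with a ha
    exact (hconst a ha).symm
  have := tendsto_nhds_unique hconst' hdiff
  have hFg : F ρ = g ρ := by linarith
  exact hFg
end

section
/- Let ρ > 0 and z = 1/ρ, and for k ∈ ℝ define p_k(x) = ((z+x)(k+2) − k·√(z(z+1))) / (2π(z+x)·√(x(1−x))) for x ∈ (0,1). Then p_k(x) ≥ 0 for all x ∈ (0,1) if and only if k_{c1} ≤ k ≤ k_{c2}, where k_{c1} = −2√(z+1)/(√(z+1)−√z) and k_{c2} = 2√z/(√(z+1)−√z). -/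
open Real Set

lemma affine_nonneg_Ioo (c d : ℝ) :
    (∀ x ∈ Ioo (0:ℝ) 1, 0 ≤ c * x + d) ↔ 0 ≤ d ∧ 0 ≤ c + d := by
  constructor
  · intro h
    have key : ∀ c' d' : ℝ, (∀ x ∈ Ioo (0:ℝ) 1, 0 ≤ c' * x + d') → 0 ≤ d' := by
      intro c' d' h'
      by_contra hd
      push_neg at hd
      set x := min (1/2) (-d' / (|c'| + 1)) with hxdef
      have hcpos : (0:ℝ) < |c'| + 1 := by positivity
      have hx0 : 0 < x := lt_min (by norm_num) (div_pos (by linarith) hcpos)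
      have hx1 : x < 1 := lt_of_le_of_lt (min_le_left _ _) (by norm_num)
      have h1 := h' x ⟨hx0, hx1⟩
      have hle : x ≤ -d' / (|c'| + 1) := min_le_right _ _
      have h2 : x * (|c'| + 1) ≤ -d' := (le_div_iff₀ hcpos).mp hle
      have h3 : c' * x ≤ |c'| * x := mul_le_mul_of_nonneg_right (le_abs_self c') hx0.le
      nlinarith
    refine ⟨key c d h, key (-c) (c + d) ?_⟩
    intro x hx
    have hx' : (1 - x) ∈ Ioo (0:ℝ) 1 := ⟨by linarith [hx.2], by linarith [hx.1]⟩
    have := h (1 - x) hx'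
    nlinarith
  · rintro ⟨hd, hcd⟩ x hx
    nlinarith [mul_nonneg (le_of_lt hx.1) hcd, mul_nonneg hd (by linarith [hx.2] : (0:ℝ) ≤ 1 - x),
      hx.1.le, hx.2.le]

/-- positivity range of the constrained spectral density in the
solution region `S₀₁`: with `z = 1/ρ`,
`p_k(x) = ((z+x)(k+2) − k√(z(z+1)))/(2π(z+x)√(x(1−x))) ≥ 0` on `(0,1)` iff
`k_{c1} ≤ k ≤ k_{c2}`. -/
theorem S01_density_positivity (ρ : ℝ) (hρ : 0 < ρ) (k : ℝ) :
    (∀ x ∈ Ioo (0:ℝ) 1,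
        0 ≤ ((1 / ρ + x) * (k + 2) - k * Real.sqrt ((1 / ρ) * (1 / ρ + 1))) /
          (2 * Real.pi * (1 / ρ + x) * Real.sqrt (x * (1 - x)))) ↔
      (-(2 * Real.sqrt (1 / ρ + 1)) / (Real.sqrt (1 / ρ + 1) - Real.sqrt (1 / ρ)) ≤ k ∧
        k ≤ 2 * Real.sqrt (1 / ρ) / (Real.sqrt (1 / ρ + 1) - Real.sqrt (1 / ρ))) := by
  have hz : (0:ℝ) < 1 / ρ := by positivity
  set z := 1 / ρ with hzdef
  set a := Real.sqrt z with hadef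
  set b := Real.sqrt (z + 1) with hbdef
  have ha : 0 < a := Real.sqrt_pos.mpr hz
  have hb : 0 < b := Real.sqrt_pos.mpr (by linarith)
  have ha2 : a ^ 2 = z := Real.sq_sqrt hz.le
  have hb2 : b ^ 2 = z + 1 := Real.sq_sqrt (by linarith)
  have hab : Real.sqrt (z * (z + 1)) = a * b := Real.sqrt_mul hz.le _
  have hba : a < b := Real.sqrt_lt_sqrt hz.le (by linarith)
  have hba' : 0 < b - a := by linarith
  -- the numerator as an affine function
  have hmain : (∀ x ∈ Ioo (0:ℝ) 1,
      0 ≤ ((z + x) * (k + 2) - k * Real.sqrt (z * (z + 1))) /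
        (2 * Real.pi * (z + x) * Real.sqrt (x * (1 - x)))) ↔
      (∀ x ∈ Ioo (0:ℝ) 1, 0 ≤ (k + 2) * x + (z * (k + 2) - k * (a * b))) := by
    rw [hab]
    apply forall₂_congr
    intro x hx
    have hD : 0 < 2 * Real.pi * (z + x) * Real.sqrt (x * (1 - x)) := by
      have h1 : 0 < Real.sqrt (x * (1 - x)) :=
        Real.sqrt_pos.mpr (mul_pos hx.1 (by linarith [hx.2]))
      have h2 : 0 < z + x := by linarith [hx.1]
      have h3 : 0 < 2 * Real.pi := by positivity
      exact mul_pos (mul_pos h3 h2) h1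
    rw [le_div_iff₀ hD, zero_mul]
    constructor <;> intro h <;> nlinarith
  rw [hmain, affine_nonneg_Ioo]
  have e1 : z * (k + 2) - k * (a * b) = a * (2 * a - k * (b - a)) := by
    linear_combination (-(k + 2)) * ha2
  have e2 : (k + 2) + (z * (k + 2) - k * (a * b)) = b * (2 * b + k * (b - a)) := by
    linear_combination (-(k + 2)) * hb2
  have h1 : (0 ≤ z * (k + 2) - k * (a * b)) ↔ k ≤ 2 * a / (b - a) := by
    rw [e1, le_div_iff₀ hba']
    constructor
    · intro h; nlinarith [ha, hba']
    · intro h; nlinarith [mul_nonneg ha.le (by linarith : (0:ℝ) ≤ 2 * a - k * (b - a))]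
  have h2 : (0 ≤ (k + 2) + (z * (k + 2) - k * (a * b))) ↔
      -(2 * b) / (b - a) ≤ k := by
    rw [e2, div_le_iff₀ hba']
    constructor
    · intro h; nlinarith [hb, hba']
    · intro h; nlinarith [mul_nonneg hb.le (by linarith : (0:ℝ) ≤ 2 * b + k * (b - a))]
  rw [h1, h2, and_comm]
end

section
/- For all real n₀ > 0, z > 0 and k ∈ ℝ, there exists a unique b ∈ (0,1) satisfying n₀/√(1−b) + k·√(z/(z+b)) = 2 + n₀ + k. -/
open Real Set

private lemma lemA {b₁ b₂ : ℝ} (h1 : 0 < b₁) (h2 : b₁ < b₂) (h3 : b₂ < 1) :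
    (1 / Real.sqrt (1 - b₁) - 1) * b₂ < (1 / Real.sqrt (1 - b₂) - 1) * b₁ := by
  set s₁ := Real.sqrt (1 - b₁) with hs₁def
  set s₂ := Real.sqrt (1 - b₂) with hs₂def
  have hs₂0 : 0 < s₂ := Real.sqrt_pos.2 (by linarith)
  have hltS : s₂ < s₁ := Real.sqrt_lt_sqrt (by linarith) (by linarith)
  have hs₁0 : 0 < s₁ := lt_trans hs₂0 hltS
  have hq₁ : s₁ ^ 2 = 1 - b₁ := Real.sq_sqrt (by linarith)
  have hq₂ : s₂ ^ 2 = 1 - b₂ := Real.sq_sqrt (by linarith)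
  have hs₁1 : s₁ < 1 := by nlinarith
  have hb₁ : b₁ = 1 - s₁ ^ 2 := by linarith
  have hb₂ : b₂ = 1 - s₂ ^ 2 := by linarith
  rw [hb₁, hb₂, div_sub' (ne_of_gt hs₁0), div_sub' (ne_of_gt hs₂0),
    div_mul_eq_mul_div, div_mul_eq_mul_div, div_lt_div_iff₀ hs₁0 hs₂0]
  nlinarith [mul_pos (mul_pos (sub_pos.2 hs₁1) (by linarith : (0:ℝ) < 1 - s₂))
      (mul_pos (sub_pos.2 hltS) (by linarith : (0:ℝ) < s₁ + s₂ + 1))]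

private lemma lemB {z b₁ b₂ : ℝ} (hz : 0 < z) (h1 : 0 < b₁) (h2 : b₁ < b₂) :
    (1 - Real.sqrt (z / (z + b₂))) * b₁ < (1 - Real.sqrt (z / (z + b₁))) * b₂ := by
  set w₁ := Real.sqrt (z / (z + b₁)) with hw₁def
  set w₂ := Real.sqrt (z / (z + b₂)) with hw₂def
  have hz₁ : (0:ℝ) < z + b₁ := by linarith
  have hz₂ : (0:ℝ) < z + b₂ := by linarith
  have hw₂0 : 0 < w₂ := Real.sqrt_pos.2 (div_pos hz hz₂)
  have hltW : w₂ < w₁ := by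
    apply Real.sqrt_lt_sqrt (le_of_lt (div_pos hz hz₂))
    exact div_lt_div_of_pos_left hz hz₁ (by linarith)
  have hw₁0 : 0 < w₁ := lt_trans hw₂0 hltW
  have hq₁ : w₁ ^ 2 * (z + b₁) = z := by
    rw [hw₁def, Real.sq_sqrt (le_of_lt (div_pos hz hz₁))]; field_simp
  have hq₂ : w₂ ^ 2 * (z + b₂) = z := by
    rw [hw₂def, Real.sq_sqrt (le_of_lt (div_pos hz hz₂))]; field_simp
  have hw₁1 : w₁ < 1 := by nlinarith [hq₁, mul_pos (show (0:ℝ) < w₁+1 by linarith) hz₁]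
  have e₁ : w₁^2 * b₁ = z * (1 - w₁^2) := by nlinarith [hq₁]
  have e₂ : w₂^2 * b₂ = z * (1 - w₂^2) := by nlinarith [hq₂]
  have hpos : 0 < w₁^2 * w₂^2 := by positivity
  have hD : ((1 - w₁) * b₂ - (1 - w₂) * b₁) * (w₁^2 * w₂^2)
      = z*(1-w₁)*(1-w₂)*(w₁-w₂)*(w₁+w₂+w₁*w₂) := by
    linear_combination ((1-w₁)*w₁^2) * e₂ - ((1-w₂)*w₂^2) * e₁
  have key : 0 < ((1 - w₁) * b₂ - (1 - w₂) * b₁) * (w₁^2 * w₂^2) := by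
    rw [hD]
    have : (0:ℝ) < w₁ - w₂ := by linarith
    have h1w : (0:ℝ) < 1 - w₁ := by linarith
    have h2w : (0:ℝ) < 1 - w₂ := by linarith
    positivity
  nlinarith [mul_pos hpos (by linarith : (0:ℝ) < 1)]

private lemma keyFalse (n₀ z k : ℝ) (hn : 0 < n₀) (hz : 0 < z) {b₁ b₂ : ℝ}
    (hb₁ : b₁ ∈ Ioo (0:ℝ) 1) (hb₂ : b₂ ∈ Ioo (0:ℝ) 1) (hlt : b₁ < b₂)
    (e₁ : n₀ / Real.sqrt (1 - b₁) + k * Real.sqrt (z / (z + b₁)) = 2 + n₀ + k)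
    (e₂ : n₀ / Real.sqrt (1 - b₂) + k * Real.sqrt (z / (z + b₂)) = 2 + n₀ + k) :
    False := by
  obtain ⟨hb₁0, hb₁1⟩ := hb₁
  obtain ⟨hb₂0, hb₂1⟩ := hb₂
  set s₁ := Real.sqrt (1 - b₁) with hs₁def
  set s₂ := Real.sqrt (1 - b₂) with hs₂def
  set w₁ := Real.sqrt (z / (z + b₁)) with hw₁def
  set w₂ := Real.sqrt (z / (z + b₂)) with hw₂def
  have hs₂0 : 0 < s₂ := Real.sqrt_pos.2 (by linarith)
  have hltS : s₂ < s₁ := Real.sqrt_lt_sqrt (by linarith) (by linarith)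
  have hs₁0 : 0 < s₁ := lt_trans hs₂0 hltS
  have hz₁ : (0:ℝ) < z + b₁ := by linarith
  have hz₂ : (0:ℝ) < z + b₂ := by linarith
  have hw₂0 : 0 < w₂ := Real.sqrt_pos.2 (div_pos hz hz₂)
  have hltW : w₂ < w₁ := by
    apply Real.sqrt_lt_sqrt (le_of_lt (div_pos hz hz₂))
    exact div_lt_div_of_pos_left hz hz₁ (by linarith)
  rcases le_or_gt k 0 with hk | hk
  · -- monotone case
    have h1 : n₀ / s₁ < n₀ / s₂ := div_lt_div_of_pos_left hn hs₂0 hltS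
    have h2 : k * w₁ ≤ k * w₂ := mul_le_mul_of_nonpos_left (le_of_lt hltW) hk
    linarith
  · -- star-shaped case
    have q₁ : n₀ * (1 / s₁ - 1) - k * (1 - w₁) = 2 := by linear_combination e₁
    have q₂ : n₀ * (1 / s₂ - 1) - k * (1 - w₂) = 2 := by linear_combination e₂
    have hA := mul_lt_mul_of_pos_left (lemA hb₁0 hlt hb₂1) hn
    have hB := mul_lt_mul_of_pos_left (lemB hz hb₁0 hlt) hk
    rw [← hs₁def, ← hs₂def] at hA
    rw [← hw₁def, ← hw₂def] at hB
    nlinarith [mul_pos hb₁0 hb₂0]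

/-- unique solvability of the normalization condition (eq. (46) of
the paper) for the upper support edge `b` in the solution region `S₀ᵦ`:
for `n₀ > 0`, `z > 0` and any `k`, there is a unique `b ∈ (0,1)` with
`n₀/√(1−b) + k√(z/(z+b)) = 2 + n₀ + k`. -/
theorem normalization_unique_root (n₀ z k : ℝ) (hn : 0 < n₀) (hz : 0 < z) :
    ∃! b : ℝ, b ∈ Ioo (0:ℝ) 1 ∧
      n₀ / Real.sqrt (1 - b) + k * Real.sqrt (z / (z + b)) = 2 + n₀ + k := by
  set f : ℝ → ℝ := fun b => n₀ / Real.sqrt (1 - b) + k * Real.sqrt (z / (z + b)) with hf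
  set M := 2 + n₀ + k + |k| with hM
  have hM0 : 0 < M := by
    have := neg_abs_le k
    simp only [hM]; linarith
  have hεmin : 0 < min ((n₀ / M) ^ 2) 1 := lt_min (by positivity) one_pos
  set ε := min ((n₀ / M) ^ 2) 1 / 2 with hε
  have hε0 : 0 < ε := by positivity
  have hε1 : ε < 1 := by
    have := min_le_right ((n₀ / M) ^ 2) 1
    simp only [hε]; linarith
  set b₀ := 1 - ε with hb₀def
  have hb₀0 : 0 < b₀ := by simp only [hb₀def]; linarith
  have hb₀1 : b₀ < 1 := by simp only [hb₀def]; linarith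
  have hf0 : f 0 = n₀ + k := by
    simp only [hf, sub_zero, add_zero, Real.sqrt_one, div_one,
      div_self (ne_of_gt hz)]
    ring
  have hfb₀ : 2 + n₀ + k < f b₀ := by
    have h1b : 1 - b₀ = ε := by simp only [hb₀def]; ring
    have hsε : Real.sqrt ε < n₀ / M := by
      rw [show Real.sqrt ε = Real.sqrt ε from rfl]
      have : ε < (n₀ / M) ^ 2 := by
        have := min_le_left ((n₀ / M) ^ 2) 1
        simp only [hε]; linarith [hεmin]
      exact (Real.sqrt_lt' (by positivity)).2 this
    have hsε0 : 0 < Real.sqrt ε := Real.sqrt_pos.2 hε0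
    have hnM : n₀ / (n₀ / M) < n₀ / Real.sqrt ε := div_lt_div_of_pos_left hn hsε0 hsε
    have hnM' : n₀ / (n₀ / M) = M := by field_simp
    have hw01 : Real.sqrt (z / (z + b₀)) ≤ 1 := by
      rw [show (1:ℝ) = Real.sqrt 1 from Real.sqrt_one.symm]
      apply Real.sqrt_le_sqrt
      rw [div_le_one (by linarith)]; linarith
    have hw00 : 0 ≤ Real.sqrt (z / (z + b₀)) := Real.sqrt_nonneg _
    have hkw : -|k| ≤ k * Real.sqrt (z / (z + b₀)) := by
      nlinarith [neg_abs_le k, abs_nonneg k,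
        mul_nonneg (by linarith [neg_abs_le k] : (0:ℝ) ≤ k + |k|) hw00,
        mul_nonneg (abs_nonneg k) (by linarith : (0:ℝ) ≤ 1 - Real.sqrt (z / (z + b₀)))]
    have : f b₀ = n₀ / Real.sqrt ε + k * Real.sqrt (z / (z + b₀)) := by
      simp only [hf, h1b]
    rw [this]
    have : M < n₀ / Real.sqrt ε := by rw [← hnM']; exact hnM
    simp only [hM] at this
    linarith
  have hcont : ContinuousOn f (Icc 0 b₀) := by
    apply ContinuousOn.add
    · apply ContinuousOn.div continuousOn_const
      · exact (Real.continuous_sqrt.comp (continuous_const.sub continuous_id)).continuousOn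
      · intro x hx
        have hx2 : x ≤ b₀ := hx.2
        exact ne_of_gt (Real.sqrt_pos.2 (by simp only [hb₀def] at hx2; linarith))
    · apply ContinuousOn.mul continuousOn_const
      apply ContinuousOn.sqrt
      apply ContinuousOn.div continuousOn_const
      · exact (continuous_const.add continuous_id).continuousOn
      · intro x hx
        have hx1 : (0:ℝ) ≤ x := hx.1
        exact ne_of_gt (by linarith)
  have hmem : (2 + n₀ + k) ∈ Ioo (f 0) (f b₀) := ⟨by rw [hf0]; linarith, hfb₀⟩
  obtain ⟨b, hbmem, hbeq⟩ := intermediate_value_Ioo (le_of_lt hb₀0) hcont hmem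
  refine ⟨b, ⟨⟨hbmem.1, lt_trans hbmem.2 hb₀1⟩, hbeq⟩, ?_⟩
  rintro b' ⟨hb', he'⟩
  have hb : b ∈ Ioo (0:ℝ) 1 := ⟨hbmem.1, lt_trans hbmem.2 hb₀1⟩
  rcases lt_trichotomy b' b with h | h | h
  · exact absurd (keyFalse n₀ z k hn hz hb' hb h he' hbeq) (by simp)
  · exact h
  · exact absurd (keyFalse n₀ z k hn hz hb hb' h hbeq he') (by simp)
end

section
/- Let N ≥ 1 be an integer, let s₁, …, s_N be distinct positive real numbers, and for ε > 0 and real z ≠ 0 define F_ε(z) = (1/2π) ∫_ℝ e^{ipz} / ((ε − ip)·∏_{j=1}^N (s_j − ip)) dp, an absolutely convergent integral. Then lim_{ε→0⁺} F_ε(z) = 0 if z > 0, and lim_{ε→0⁺} F_ε(z) = ∏_{j=1}^N s_j^{−1} − ∑_{j=1}^N e^{s_j z} / ( s_j · ∏_{k≠j} (s_k − s_j) ) if z < 0. -/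
open MeasureTheory Real Set Filter Complex
open scoped BigOperators
open scoped FourierTransform

lemma cexp_decay_integrableOn {b : ℂ} (hb : 0 < b.re) :
    IntegrableOn (fun t : ℝ => Complex.exp (-b * t)) (Ioi 0) := by
  apply Integrable.mono' ((exp_neg_integrableOn_Ioi 0 hb).mono_set (subset_refl _))
  · exact (Complex.continuous_exp.comp (by continuity)).aestronglyMeasurable.restrict
  · filter_upwards with t
    rw [Complex.norm_exp]
    simp [mul_comm]

lemma integral_cexp_Ioi {b : ℂ} (hb : 0 < b.re) :
    ∫ t in Ioi (0:ℝ), Complex.exp (-b * t) = b⁻¹ := by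
  have hbne : b ≠ 0 := fun h => by simp [h] at hb
  have hderiv : ∀ x ∈ Ici (0:ℝ), HasDerivAt (fun t : ℝ => -b⁻¹ * Complex.exp (-b * t))
      (Complex.exp (-b * x)) x := by
    intro x _
    have h1 : HasDerivAt (fun t : ℝ => Complex.exp (-b * t)) (-b * Complex.exp (-b * x)) x := by
      have := ((Complex.hasDerivAt_exp (-b * x)).comp x
        (((hasDerivAt_id x).ofReal_comp).const_mul (-b)))
      simpa [mul_comm, Function.comp_def] using this
    have := h1.const_mul (-b⁻¹)
    convert this using 1
    · rfl
    · rw [← mul_assoc, neg_mul_neg, inv_mul_cancel₀ hbne, one_mul]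
  have htend : Tendsto (fun t : ℝ => -b⁻¹ * Complex.exp (-b * t)) atTop (nhds 0) := by
    rw [show (0:ℂ) = -b⁻¹ * 0 by ring]
    apply Tendsto.const_mul
    rw [tendsto_zero_iff_norm_tendsto_zero]
    have : ∀ t : ℝ, ‖Complex.exp (-b * t)‖ = Real.exp (-(b.re) * t) := by
      intro t; rw [Complex.norm_exp]; simp [mul_comm]
    simp only [this]
    exact Real.tendsto_exp_atBot.comp (tendsto_id.const_mul_atTop_of_neg (neg_neg_iff_pos.mpr hb))
  have := integral_Ioi_of_hasDerivAt_of_tendsto' hderiv (cexp_decay_integrableOn hb) htend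
  simpa using this

noncomputable def oneExp (c : ℝ) (t : ℝ) : ℂ := if 0 ≤ t then Complex.exp (-(c:ℂ) * t) else 0

lemma oneExp_eq_indicator (c : ℝ) :
    oneExp c = Set.indicator (Ici (0:ℝ)) (fun t : ℝ => Complex.exp (-(c:ℂ) * t)) := by
  ext t; simp [oneExp, Set.indicator, mem_Ici]

lemma oneExp_integrable {c : ℝ} (hc : 0 < c) : Integrable (oneExp c) := by
  rw [oneExp_eq_indicator, integrable_indicator_iff measurableSet_Ici]
  have : IntegrableOn (fun t : ℝ => Complex.exp (-(c:ℂ) * t)) (Ici 0) :=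
    (integrableOn_Ici_iff_integrableOn_Ioi).mpr (cexp_decay_integrableOn (by simpa using hc))
  exact this

lemma oneExp_kernel_eq (c : ℝ) (ξ : ℝ) :
    (fun t : ℝ => Complex.exp (↑(-2*π*t*ξ)*Complex.I) • oneExp c t)
      = Set.indicator (Ici (0:ℝ)) (fun t : ℝ => Complex.exp (-((c:ℂ)+2*π*ξ*Complex.I) * t)) := by
  funext v
  by_cases hv : 0 ≤ v
  · simp only [oneExp, if_pos hv, Set.indicator_of_mem (mem_Ici.mpr hv), smul_eq_mul,
      ← Complex.exp_add]
    congr 1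
    push_cast
    ring
  · rw [Set.indicator_of_notMem (by simpa using hv)]
    simp [oneExp, if_neg hv]

open FourierTransform in
lemma oneExp_fourier {c : ℝ} (hc : 0 < c) (ξ : ℝ) :
    𝓕 (oneExp c) ξ = ((c:ℂ) + 2*π*ξ*Complex.I)⁻¹ := by
  rw [Real.fourier_real_eq_integral_exp_smul]
  have hre : (0:ℝ) < ((c:ℂ) + 2*π*ξ*Complex.I).re := by simp [hc]
  have hpt : ∀ v : ℝ, Complex.exp (↑(-2*π*v*ξ)*Complex.I) • oneExp c v
      = Set.indicator (Ici (0:ℝ))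
          (fun t : ℝ => Complex.exp (-((c:ℂ)+2*π*ξ*Complex.I) * t)) v :=
    fun v => congrFun (oneExp_kernel_eq c ξ) v
  simp only [hpt]
  rw [integral_indicator measurableSet_Ici]
  rw [show ∫ t in Ici (0:ℝ), Complex.exp (-((c:ℂ)+2*π*ξ*Complex.I) * t) =
      ∫ t in Ioi (0:ℝ), Complex.exp (-((c:ℂ)+2*π*ξ*Complex.I) * t) from
    setIntegral_congr_set Ioi_ae_eq_Ici.symm]
  exact integral_cexp_Ioi hre

noncomputable def coefC {n : ℕ} (a : Fin n → ℝ) (j : Fin n) : ℂ :=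
  ((∏ k ∈ Finset.univ.erase j, ((a k : ℂ) - a j)))⁻¹

noncomputable def gFun {n : ℕ} (a : Fin n → ℝ) (t : ℝ) : ℂ :=
  ∑ j, coefC a j * oneExp (a j) t


lemma partial_fractions {n : ℕ} (hn : 0 < n) (v : Fin n → ℂ) (hv : Function.Injective v)
    (x : ℂ) (hx : ∀ j, v j ≠ x) :
    (∏ j, (v j - x))⁻¹ = ∑ j, ((v j - x) * ∏ k ∈ Finset.univ.erase j, (v k - v j))⁻¹ := by
  have hne : (Finset.univ : Finset (Fin n)).Nonempty := Finset.univ_nonempty_iff.mpr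
    (Fin.pos_iff_nonempty.mp hn)
  have hsum := Lagrange.sum_basis (s := Finset.univ) (v := v) hv.injOn hne
  have heval := congrArg (Polynomial.eval x) hsum
  rw [Polynomial.eval_finset_sum, Polynomial.eval_one] at heval
  have heval' : ∑ j, ∏ k ∈ Finset.univ.erase j, ((v j - v k)⁻¹ * (x - v k)) = 1 := by
    rw [← heval]
    refine Finset.sum_congr rfl fun j _ => ?_
    rw [Lagrange.basis, Polynomial.eval_prod]
    refine Finset.prod_congr rfl fun k _ => ?_
    simp [Lagrange.basisDivisor]
  have key : ∀ j : Fin n,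
      (∏ k ∈ Finset.univ.erase j, ((v j - v k)⁻¹ * (x - v k))) * (∏ k, (v k - x))⁻¹
      = ((v j - x) * ∏ k ∈ Finset.univ.erase j, (v k - v j))⁻¹ := by
    intro j
    have h1 : ∀ k ∈ Finset.univ.erase j, (v j - v k)⁻¹ * (x - v k) * (v k - x)⁻¹
        = (v k - v j)⁻¹ := by
      intro k hk
      have hkj : v k - v j ≠ 0 := sub_ne_zero.mpr (fun h => (Finset.mem_erase.mp hk).1 (hv h))
      have hjk : v j - v k ≠ 0 := sub_ne_zero.mpr fun h => (Finset.mem_erase.mp hk).1 (hv h).symm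
      have hkx : v k - x ≠ 0 := sub_ne_zero.mpr (hx k)
      field_simp
      ring
    calc (∏ k ∈ Finset.univ.erase j, ((v j - v k)⁻¹ * (x - v k))) * (∏ k, (v k - x))⁻¹
        = (∏ k ∈ Finset.univ.erase j, ((v j - v k)⁻¹ * (x - v k)))
            * ((v j - x) * ∏ k ∈ Finset.univ.erase j, (v k - x))⁻¹ := by
          rw [← Finset.mul_prod_erase _ (fun k => v k - x) (Finset.mem_univ j)]
      _ = (v j - x)⁻¹ * ∏ k ∈ Finset.univ.erase j,
            ((v j - v k)⁻¹ * (x - v k) * (v k - x)⁻¹) := by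
          simp only [mul_inv, ← Finset.prod_inv_distrib, Finset.prod_mul_distrib]; ring
      _ = (v j - x)⁻¹ * ∏ k ∈ Finset.univ.erase j, (v k - v j)⁻¹ := by
          rw [Finset.prod_congr rfl h1]
      _ = ((v j - x) * ∏ k ∈ Finset.univ.erase j, (v k - v j))⁻¹ := by
          rw [mul_inv, ← Finset.prod_inv_distrib]
  calc (∏ j, (v j - x))⁻¹ = 1 * (∏ j, (v j - x))⁻¹ := (one_mul _).symm
    _ = ∑ j, (∏ k ∈ Finset.univ.erase j, ((v j - v k)⁻¹ * (x - v k))) * (∏ k, (v k - x))⁻¹ := by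
        rw [← heval', Finset.sum_mul]
    _ = _ := Finset.sum_congr rfl fun j _ => key j

lemma oneExp_kernel_integrable {c : ℝ} (hc : 0 < c) (ξ : ℝ) :
    Integrable (fun t : ℝ => Complex.exp (↑(-2*π*t*ξ)*Complex.I) • oneExp c t) := by
  rw [oneExp_kernel_eq, integrable_indicator_iff measurableSet_Ici]
  exact (integrableOn_Ici_iff_integrableOn_Ioi).mpr (cexp_decay_integrableOn (by simpa using hc))

lemma gFun_integrable {n : ℕ} {a : Fin n → ℝ} (ha : ∀ j, 0 < a j) :
    Integrable (gFun a) := by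
  apply integrable_finset_sum
  intro j _
  exact (oneExp_integrable (ha j)).const_mul _

lemma gFun_fourier {n : ℕ} {a : Fin n → ℝ} (ha : ∀ j, 0 < a j) (ξ : ℝ) :
    (𝓕 (gFun a) : ℝ → ℂ) ξ = ∑ j, coefC a j * ((a j : ℂ) + 2*π*ξ*Complex.I)⁻¹ := by
  rw [Real.fourier_real_eq_integral_exp_smul]
  have hpt : ∀ t : ℝ, Complex.exp (↑(-2*π*t*ξ)*Complex.I) • gFun a t
      = ∑ j, coefC a j • (Complex.exp (↑(-2*π*t*ξ)*Complex.I) • oneExp (a j) t) := by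
    intro t
    simp only [gFun, smul_eq_mul, Finset.mul_sum]
    exact Finset.sum_congr rfl fun j _ => by ring
  simp only [hpt]
  have hint : ∀ j ∈ Finset.univ, Integrable
      (fun t : ℝ => coefC a j • (Complex.exp (↑(-2*π*t*ξ)*Complex.I) • oneExp (a j) t)) :=
    fun j _ => (oneExp_kernel_integrable (ha j) ξ).smul (coefC a j)
  rw [integral_finset_sum _ hint]
  refine Finset.sum_congr rfl fun j _ => ?_
  rw [integral_smul, ← oneExp_fourier (ha j) ξ, Real.fourier_real_eq_integral_exp_smul]
  simp [smul_eq_mul]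

lemma gFun_fourier_prod {n : ℕ} (hn : 0 < n) {a : Fin n → ℝ} (ha : ∀ j, 0 < a j)
    (hinj : Function.Injective a) (ξ : ℝ) :
    (𝓕 (gFun a) : ℝ → ℂ) ξ = (∏ j, ((a j : ℂ) + 2*π*ξ*Complex.I))⁻¹ := by
  rw [gFun_fourier ha]
  have hv : Function.Injective (fun j => ((a j : ℂ))) :=
    fun i j h => hinj (Complex.ofReal_inj.mp h)
  have hx : ∀ j, ((a j : ℂ)) ≠ -(2*π*ξ*Complex.I) := by
    intro j h
    have := congrArg Complex.re h
    simp at this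
    exact (ha j).ne' this
  have hpf := partial_fractions hn (fun j => ((a j : ℂ))) hv (-(2*π*ξ*Complex.I)) hx
  simp only [sub_neg_eq_add] at hpf
  rw [hpf]
  refine Finset.sum_congr rfl fun j _ => ?_
  rw [mul_inv, coefC, mul_comm]

lemma inv_sq_add_integrable {m : ℝ} (hm : 0 < m) :
    Integrable (fun ξ : ℝ => (m^2 + ξ^2)⁻¹) := by
  have h : (fun ξ : ℝ => (m^2 + ξ^2)⁻¹)
      = fun ξ : ℝ => m⁻¹^2 * (1 + (m⁻¹ * ξ)^2)⁻¹ := by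
    ext ξ
    have h0 : m^2 + ξ^2 ≠ 0 := by positivity
    have h1 : 1 + (m⁻¹*ξ)^2 ≠ 0 := by positivity
    field_simp
  rw [h]
  exact (integrable_inv_one_add_sq.comp_mul_left' (inv_ne_zero hm.ne')).const_mul _
lemma prod_inv_integrable {n : ℕ} (hn : 2 ≤ n) {a : Fin n → ℝ} (ha : ∀ j, 0 < a j) :
    Integrable (fun ξ : ℝ => (∏ j, ((a j : ℂ) + 2*π*ξ*Complex.I))⁻¹) := by
  have hne : (Finset.univ : Finset (Fin n)).Nonempty :=
    Finset.univ_nonempty_iff.mpr (Fin.pos_iff_nonempty.mp (by omega))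
  set m : ℝ := Finset.univ.inf' hne a with hmdef
  have hm : 0 < m := (Finset.lt_inf'_iff hne).mpr (fun j _ => ha j)
  have hmle : ∀ j, m ≤ a j := fun j => Finset.inf'_le _ (Finset.mem_univ j)
  -- continuity / measurability
  have hcont : Continuous (fun ξ : ℝ => (∏ j, ((a j : ℂ) + 2*π*ξ*Complex.I))⁻¹) := by
    apply Continuous.inv₀
    · exact continuous_finset_prod _ (fun j _ => by continuity)
    · intro ξ
      apply Finset.prod_ne_zero_iff.mpr
      intro j _
      intro h
      have := congrArg Complex.re h
      simp at this
      exact (ha j).ne' this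
  -- norm bound
  have hbound : ∀ ξ : ℝ, ‖(∏ j, ((a j : ℂ) + 2*π*ξ*Complex.I))⁻¹‖
      ≤ (m^(n-2))⁻¹ * (m^2 + ξ^2)⁻¹ := by
    intro ξ
    have hfac : ∀ j, Real.sqrt (m^2 + ξ^2) ≤ ‖((a j : ℂ) + 2*π*ξ*Complex.I)‖ := by
      intro j
      have : ((a j : ℂ) + 2*π*ξ*Complex.I) = Complex.mk (a j) (2*π*ξ) := by
        apply Complex.ext <;> simp
      rw [this, Complex.norm_def, Complex.normSq_mk]
      rw [show a j * a j + 2*π*ξ*(2*π*ξ) = (a j)^2 + (2*π*ξ)^2 by ring]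
      apply Real.sqrt_le_sqrt
      have h1 : m^2 ≤ (a j)^2 := pow_le_pow_left₀ hm.le (hmle j) 2
      have hπ : (1:ℝ) ≤ (2*π)^2 := by nlinarith [Real.pi_gt_three]
      have h2 : ξ^2 ≤ (2*π*ξ)^2 := by
        calc ξ^2 = 1 * ξ^2 := (one_mul _).symm
          _ ≤ (2*π)^2 * ξ^2 := mul_le_mul_of_nonneg_right hπ (sq_nonneg ξ)
          _ = (2*π*ξ)^2 := by ring
      linarith
    have hsq : 0 < Real.sqrt (m^2 + ξ^2) := Real.sqrt_pos.mpr (by positivity)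
    have hprodge : Real.sqrt (m^2 + ξ^2) ^ n ≤ ∏ j, ‖((a j : ℂ) + 2*π*ξ*Complex.I)‖ := by
      calc Real.sqrt (m^2 + ξ^2) ^ n = ∏ _j : Fin n, Real.sqrt (m^2 + ξ^2) := by
            rw [Finset.prod_const, Finset.card_univ, Fintype.card_fin]
        _ ≤ _ := Finset.prod_le_prod (fun j _ => hsq.le) (fun j _ => hfac j)
    rw [norm_inv, norm_prod]
    have hlow : (m^2 + ξ^2) * m^(n-2) ≤ Real.sqrt (m^2 + ξ^2) ^ n := by
      have hsplit : Real.sqrt (m^2 + ξ^2) ^ n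
          = (m^2 + ξ^2) * Real.sqrt (m^2 + ξ^2) ^ (n-2) := by
        conv_lhs => rw [show n = 2 + (n-2) by omega]
        rw [pow_add, Real.sq_sqrt (by positivity)]
      rw [hsplit]
      apply mul_le_mul_of_nonneg_left _ (by positivity)
      apply pow_le_pow_left₀ hm.le
      calc m = Real.sqrt (m^2) := (Real.sqrt_sq hm.le).symm
        _ ≤ Real.sqrt (m^2 + ξ^2) := Real.sqrt_le_sqrt (by nlinarith [sq_nonneg ξ])
    have hpos : (0:ℝ) < (m^2 + ξ^2) * m^(n-2) := by positivity
    calc (∏ j, ‖((a j : ℂ) + 2*π*ξ*Complex.I)‖)⁻¹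
        ≤ ((m^2 + ξ^2) * m^(n-2))⁻¹ := by
          apply inv_anti₀ hpos
          exact le_trans hlow hprodge
      _ = (m^(n-2))⁻¹ * (m^2 + ξ^2)⁻¹ := by rw [mul_inv, mul_comm]
  apply Integrable.mono' (((inv_sq_add_integrable hm).const_mul ((m^(n-2))⁻¹)))
    hcont.aestronglyMeasurable
  filter_upwards with ξ using hbound ξ

lemma gFun_continuousAt {n : ℕ} {a : Fin n → ℝ} {t : ℝ} (ht : t ≠ 0) :
    ContinuousAt (gFun a) t := by
  rcases lt_or_gt_of_ne ht with h | h
  · have hev : (fun _ : ℝ => (0:ℂ)) =ᶠ[nhds t] gFun a := by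
      filter_upwards [Iio_mem_nhds h] with u hu
      simp [gFun, oneExp, if_neg (not_le.mpr (mem_Iio.mp hu))]
    exact continuousAt_const.congr hev
  · have hev : (fun u : ℝ => ∑ j, coefC a j * Complex.exp (-(a j : ℂ) * u)) =ᶠ[nhds t]
        gFun a := by
      filter_upwards [Ioi_mem_nhds h] with u hu
      simp [gFun, oneExp, if_pos (le_of_lt (mem_Ioi.mp hu))]
    refine ContinuousAt.congr ?_ hev
    exact (continuous_finset_sum _ fun j _ => continuous_const.mul
      (Complex.continuous_exp.comp (by continuity))).continuousAt

lemma key_integral_s16 {n : ℕ} (hn : 2 ≤ n) {a : Fin n → ℝ} (ha : ∀ j, 0 < a j)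
    (hinj : Function.Injective a) {z : ℝ} (hz : z ≠ 0) :
    ∫ p : ℝ, Complex.exp (Complex.I * p * z) / ∏ j, ((a j : ℂ) - Complex.I * p)
      = (2*π) * gFun a (-z) := by
  set f : ℝ → ℂ := fun p => Complex.exp (Complex.I * p * z) / ∏ j, ((a j : ℂ) - Complex.I * p)
    with hf
  have hFgInt : Integrable (𝓕 (gFun a) : ℝ → ℂ) := by
    apply (prod_inv_integrable hn ha).congr
    filter_upwards with ξ
    exact (gFun_fourier_prod (by omega) ha hinj ξ).symm
  have h1 : ∀ ξ : ℝ, f (-(2*π) * ξ) = Complex.exp (↑(-2*π*ξ*z) * Complex.I) •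
      (𝓕 (gFun a) : ℝ → ℂ) ξ := by
    intro ξ
    rw [gFun_fourier_prod (by omega) ha hinj, hf]
    simp only [smul_eq_mul, div_eq_mul_inv]
    congr 2
    · push_cast; ring
    · exact Finset.prod_congr rfl fun j _ => by push_cast; ring
  have h2 := MeasureTheory.Measure.integral_comp_mul_left f (-(2*π))
  have h3 : (𝓕 (𝓕 (gFun a) : ℝ → ℂ) : ℝ → ℂ) z
      = ∫ ξ : ℝ, Complex.exp (↑(-2*π*ξ*z) * Complex.I) • (𝓕 (gFun a) : ℝ → ℂ) ξ :=
    Real.fourier_real_eq_integral_exp_smul _ z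
  have h4 : (𝓕 (𝓕 (gFun a) : ℝ → ℂ) : ℝ → ℂ) z = gFun a (-z) := by
    have hinv := (gFun_integrable ha).fourierInv_fourier_eq hFgInt
      (gFun_continuousAt (t := -z) (by simpa using hz))
    rw [← hinv, Real.fourierInv_eq_fourier_neg, neg_neg]
  have h5 : ∫ ξ : ℝ, f (-(2*π) * ξ) = gFun a (-z) := by
    rw [← h4, h3]
    exact integral_congr_ae (Eventually.of_forall h1)
  rw [h5] at h2
  have habs : |(-(2*π))⁻¹| = (2*π)⁻¹ := by
    rw [abs_inv, abs_neg, abs_of_pos (by positivity)]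
  rw [habs] at h2
  have h2π : (2*π : ℝ) ≠ 0 := by positivity
  calc ∫ p : ℝ, f p = ((2*π:ℝ) * (2*π:ℝ)⁻¹) • ∫ p : ℝ, f p := by
        rw [mul_inv_cancel₀ h2π, one_smul]
    _ = (2*π:ℝ) • ((2*π:ℝ)⁻¹ • ∫ p : ℝ, f p) := by rw [smul_smul]
    _ = (2*π:ℝ) • gFun a (-z) := by rw [← h2]
    _ = (2*π) * gFun a (-z) := by
        rw [real_smul]; push_cast; ring

lemma prod_erase_zero {M : Type*} [CommMonoid M] {n : ℕ} (f : Fin (n+1) → M) :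
    ∏ k ∈ Finset.univ.erase 0, f k = ∏ i : Fin n, f i.succ := by
  rw [← Finset.compl_singleton, ← Fin.image_succAbove_univ,
    Finset.prod_image (fun i _ j _ h => (Fin.succAbove_right_injective) h)]
  simp [Fin.zero_succAbove]

lemma erase_succ_eq {n : ℕ} (j : Fin n) :
    (Finset.univ.erase j.succ : Finset (Fin (n+1)))
      = insert 0 ((Finset.univ.erase j).image Fin.succ) := by
  ext k
  simp only [Finset.mem_erase, Finset.mem_univ, and_true, Finset.mem_insert, Finset.mem_image]
  constructor
  · intro hk
    rcases Fin.eq_zero_or_eq_succ k with h0 | ⟨i, rfl⟩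
    · left; exact h0
    · right
      exact ⟨i, fun h => hk (by rw [h]), rfl⟩
  · rintro (rfl | ⟨i, hij, rfl⟩)
    · exact (Fin.succ_ne_zero j).symm
    · exact fun h => hij (Fin.succ_injective _ h)

lemma prod_erase_succ {M : Type*} [CommMonoid M] {n : ℕ} (f : Fin (n+1) → M) (j : Fin n) :
    ∏ k ∈ Finset.univ.erase j.succ, f k = f 0 * ∏ k ∈ Finset.univ.erase j, f k.succ := by
  rw [erase_succ_eq, Finset.prod_insert (by simp [Fin.succ_ne_zero]),
    Finset.prod_image (fun i _ i' _ h => Fin.succ_injective _ h)]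

/-- the contour integral
`F_ε(z) = (1/2π)∫_ℝ e^{ipz}/((ε−ip)∏_j(s_j−ip)) dp` (Appendix A of the paper)
satisfies `lim_{ε→0⁺} F_ε(z) = 0` for `z > 0` and
`lim_{ε→0⁺} F_ε(z) = ∏ s_j⁻¹ − ∑_j e^{s_j z}/(s_j ∏_{k≠j}(s_k−s_j))` for `z < 0`. -/
theorem residue_integral_limit (N : ℕ) (hN : 1 ≤ N) (s : Fin N → ℝ)
    (hs : ∀ j, 0 < s j) (hinj : Function.Injective s) (z : ℝ) (hz : z ≠ 0) :
    (0 < z →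
      Tendsto
        (fun ε : ℝ =>
          (1 / (2 * Real.pi) : ℂ) *
            ∫ p : ℝ, Complex.exp (Complex.I * p * z) /
              ((↑ε - Complex.I * ↑p) * ∏ j, (↑(s j) - Complex.I * ↑p)))
        (nhdsWithin 0 (Ioi 0)) (nhds 0)) ∧
    (z < 0 →
      Tendsto
        (fun ε : ℝ =>
          (1 / (2 * Real.pi) : ℂ) *
            ∫ p : ℝ, Complex.exp (Complex.I * p * z) /
              ((↑ε - Complex.I * ↑p) * ∏ j, (↑(s j) - Complex.I * ↑p)))
        (nhdsWithin 0 (Ioi 0))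
        (nhds
          (↑(∏ j, (s j)⁻¹) -
            ↑(∑ j, Real.exp (s j * z) /
              (s j * ∏ k ∈ Finset.univ.erase j, (s k - s j)))))) := by
  have hne : (Finset.univ : Finset (Fin N)).Nonempty :=
    Finset.univ_nonempty_iff.mpr (Fin.pos_iff_nonempty.mp (by omega))
  set m : ℝ := Finset.univ.inf' hne s with hmdef
  have hm : 0 < m := (Finset.lt_inf'_iff hne).mpr (fun j _ => hs j)
  have hmle : ∀ j, m ≤ s j := fun j => Finset.inf'_le _ (Finset.mem_univ j)
  set F : ℝ → ℂ := fun ε =>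
    (1 / (2 * Real.pi) : ℂ) *
      ∫ p : ℝ, Complex.exp (Complex.I * p * z) /
        ((↑ε - Complex.I * ↑p) * ∏ j, (↑(s j) - Complex.I * ↑p)) with hF
  -- F ε = gFun (Fin.cons ε s) (-z) for 0 < ε < m
  have hFg : ∀ ε ∈ Ioo (0:ℝ) m, F ε = gFun (Fin.cons ε s) (-z) := by
    intro ε hε
    set a : Fin (N+1) → ℝ := Fin.cons ε s with hadef
    have ha : ∀ j, 0 < a j := by
      refine Fin.cases ?_ ?_ <;> simp [hadef, hε.1, hs]
    have hainj : Function.Injective a := by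
      have hεne : ∀ i, ε ≠ s i := fun i => ne_of_lt (lt_of_lt_of_le hε.2 (hmle i))
      intro i j h
      rcases Fin.eq_zero_or_eq_succ i with rfl | ⟨i', rfl⟩ <;>
        rcases Fin.eq_zero_or_eq_succ j with rfl | ⟨j', rfl⟩
      · rfl
      · exact absurd (by simpa [hadef] using h) (hεne j')
      · exact absurd (by simpa [hadef] using h.symm) (hεne i')
      · simp only [hadef, Fin.cons_succ] at h
        exact congrArg Fin.succ (hinj h)
    have hden : ∀ p : ℝ, ((↑ε - Complex.I * ↑p) * ∏ j, (↑(s j) - Complex.I * ↑p))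
        = ∏ j : Fin (N+1), ((a j : ℂ) - Complex.I * p) := by
      intro p
      rw [Fin.prod_univ_succ]
      simp [hadef]
    rw [hF]
    simp only [hden]
    rw [key_integral_s16 (by omega) ha hainj hz]
    have h2π : (2 * (π:ℂ)) ≠ 0 := by
      simp [Real.pi_ne_zero]
    field_simp
  constructor
  · intro hzpos
    have hzero : ∀ ε ∈ Ioo (0:ℝ) m, F ε = 0 := by
      intro ε hε
      rw [hFg ε hε]
      have : ∀ c : ℝ, oneExp c (-z) = 0 := by
        intro c; simp [oneExp, not_le.mpr (neg_neg_iff_pos.mpr hzpos)]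
      simp [gFun, this]
    have hev : F =ᶠ[nhdsWithin 0 (Ioi 0)] (fun _ => 0) := by
      filter_upwards [Ioo_mem_nhdsGT_of_mem (show (0:ℝ) ∈ Ico 0 m from ⟨le_rfl, hm⟩)]
        with ε hε using hzero ε hε
    exact Tendsto.congr' hev.symm tendsto_const_nhds
  · intro hzneg
    set hfun : ℝ → ℂ := fun ε =>
      (∏ j, ((s j : ℂ) - ε))⁻¹ * Complex.exp (ε * z) +
        ∑ j, ((ε - (s j:ℂ)) * ∏ k ∈ Finset.univ.erase j, ((s k:ℂ) - s j))⁻¹ *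
          Complex.exp ((s j:ℝ) * z) with hhfun
    -- eventual equality
    have hev : F =ᶠ[nhdsWithin 0 (Ioi 0)] hfun := by
      filter_upwards [Ioo_mem_nhdsGT_of_mem (show (0:ℝ) ∈ Ico 0 m from ⟨le_rfl, hm⟩)]
        with ε hε
      rw [hFg ε hε, hhfun]
      have hone : ∀ c : ℝ, oneExp c (-z) = Complex.exp (c * z) := by
        intro c
        rw [oneExp, if_pos (by linarith : (0:ℝ) ≤ -z)]
        push_cast
        ring_nf
      rw [gFun, Fin.sum_univ_succ]
      congr 1
      · rw [coefC, hone]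
        simp only [Fin.cons_zero, Fin.cons_succ]
        congr 2
        rw [prod_erase_zero]
        simp
      · refine Finset.sum_congr rfl fun j _ => ?_
        rw [coefC, hone]
        simp only [Fin.cons_zero, Fin.cons_succ]
        congr 2
        rw [prod_erase_succ]
        simp
    -- limit of hfun
    have hprodne : (∏ j, ((s j:ℂ) - (0:ℝ))) ≠ 0 := by
      rw [Finset.prod_ne_zero_iff]
      intro j _
      simp only [Complex.ofReal_zero, sub_zero]
      exact_mod_cast (hs j).ne'
    have hcont : ContinuousAt hfun 0 := by
      rw [hhfun]
      apply ContinuousAt.add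
      · apply ContinuousAt.mul
        · apply ContinuousAt.inv₀
          · exact (continuous_finset_prod _ fun j _ =>
              continuous_const.sub Complex.continuous_ofReal).continuousAt
          · exact hprodne
        · exact (Complex.continuous_exp.comp
            (Complex.continuous_ofReal.mul continuous_const)).continuousAt
      · apply tendsto_finset_sum
        intro j _
        apply ContinuousAt.mul _ continuousAt_const
        have hc : Continuous (fun ε : ℝ =>
            ((ε:ℂ) - (s j:ℂ)) * ∏ k ∈ Finset.univ.erase j, ((s k:ℂ) - s j)) :=
          (Complex.continuous_ofReal.sub continuous_const).mul continuous_const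
        apply ContinuousAt.inv₀ hc.continuousAt
        have hsj : ((s j : ℂ)) ≠ 0 := by exact_mod_cast (hs j).ne'
        have hD : (∏ k ∈ Finset.univ.erase j, ((s k:ℂ) - s j)) ≠ 0 := by
          rw [Finset.prod_ne_zero_iff]
          intro k hk
          rw [sub_ne_zero]
          exact_mod_cast fun h => (Finset.mem_erase.mp hk).1 (hinj h)
        apply mul_ne_zero _ hD
        simpa using hsj
    have htend : Tendsto hfun (nhdsWithin 0 (Ioi 0)) (nhds (hfun 0)) :=
      hcont.continuousWithinAt.tendsto
    have hval : hfun 0 = (↑(∏ j, (s j)⁻¹) -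
        ↑(∑ j, Real.exp (s j * z) / (s j * ∏ k ∈ Finset.univ.erase j, (s k - s j)))) := by
      rw [hhfun]
      push_cast
      rw [sub_eq_add_neg, ← Finset.sum_neg_distrib]
      congr 1
      · simp [Finset.prod_inv_distrib]
      · refine Finset.sum_congr rfl fun j _ => ?_
        have hsj : (s j : ℂ) ≠ 0 := by exact_mod_cast (hs j).ne'
        have hD : (∏ k ∈ Finset.univ.erase j, ((s k:ℂ) - s j)) ≠ 0 := by
          rw [Finset.prod_ne_zero_iff]
          intro k hk
          rw [sub_ne_zero]
          exact_mod_cast fun h => (Finset.mem_erase.mp hk).1 (hinj h)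
        field_simp
        ring
    rw [← hval]
    exact htend.congr' hev.symm
end
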